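/- arXiv:2309.05029 — 6 statements merged into one kernel-verified Lean document; each statement's English description precedes it below -/
import Mathlib

section
/- The map T : X → X defined by T(y₀,y₁) = (−y₀, ξ ↦ −y₀ − ∫_ξ^0 y₁(s) ds) is a bounded linear operator; for every y ∈ X one has Ty ∈ D(Ã) and Ã(Ty) = y, and for every x ∈ D(Ã) one has T(Ãx) = x. Hence T is a linear bijection of X onto D(Ã) and T = Ã⁻¹. -/
open MeasureTheory Set
open scoped RealInnerProductSpace ENNReal

noncomputable section

/-- The "present" space `ℝⁿ`. -/
abbrev En (n : ℕ) := EuclideanSpace ℝ (Fin n)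

/-- Lebesgue measure restricted to `[-d, 0]`. -/
def muD (d : ℝ) : Measure ℝ := volume.restrict (Icc (-d) 0)

/-- The Hilbert space `X = ℝⁿ × L²([-d,0];ℝⁿ)` with the Hilbertian product norm. -/
abbrev Xsp (d : ℝ) (n : ℕ) := WithLp 2 (En n × Lp (En n) 2 (muD d))

/-- First (present) component of an element of `X`. -/
def fstX {d : ℝ} {n : ℕ} (x : Xsp d n) : En n := (WithLp.equiv 2 _ x).1

/-- Second (past) component of an element of `X`. -/
def sndX {d : ℝ} {n : ℕ} (x : Xsp d n) : Lp (En n) 2 (muD d) := (WithLp.equiv 2 _ x).2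

/-- `T` acts by `T(y₀,y₁) = (-y₀, ξ ↦ -y₀ - ∫_ξ^0 y₁(s) ds)`. -/
def SpecT (d : ℝ) (n : ℕ) (T : Xsp d n →L[ℝ] Xsp d n) : Prop :=
  ∀ y : Xsp d n,
    fstX (T y) = -fstX y ∧
    (sndX (T y) : ℝ → En n) =ᵐ[muD d]
      fun ξ => -fstX y - ∫ s in ξ..0, (sndX y : ℝ → En n) s

/-- `(g, g')` is a `W^{1,2}` representative pair on `[-d,0]`: `g` is absolutely
continuous with a.e. derivative `g' ∈ L²([-d,0];ℝⁿ)`. -/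
def IsW12 (d : ℝ) {n : ℕ} (g g' : ℝ → En n) : Prop :=
  MemLp g' 2 (muD d) ∧ ∀ ξ ∈ Icc (-d) 0, g ξ = g (-d) + ∫ s in (-d)..ξ, g' s

/-- The domain `D(Ã)` of the delay operator. -/
def domA (d : ℝ) (n : ℕ) : Set (Xsp d n) :=
  {x | ∃ g g' : ℝ → En n, IsW12 d g g' ∧ g 0 = fstX x ∧ (sndX x : ℝ → En n) =ᵐ[muD d] g}


namespace DelayAux

variable {d : ℝ} {n : ℕ}

instance (d : ℝ) : IsFiniteMeasure (muD d) := by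
  constructor
  rw [muD, Measure.restrict_apply_univ, Real.volume_Icc]
  exact ENNReal.ofReal_lt_top

lemma integrableOn_of_memL2 {f : ℝ → En n} (hf : MemLp f 2 (muD d)) :
    IntegrableOn f (Icc (-d) 0) volume :=
  (hf.mono_exponent (by norm_num : (1:ℝ≥0∞) ≤ 2)).integrable le_rfl

lemma intervalIntegrable_of_memL2 {f : ℝ → En n} (hf : MemLp f 2 (muD d))
    {a b : ℝ} (ha : a ∈ Icc (-d) 0) (hb : b ∈ Icc (-d) 0) :
    IntervalIntegrable f volume a b := by
  rw [intervalIntegrable_iff]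
  exact (integrableOn_of_memL2 hf).mono_set
    (uIoc_subset_uIcc.trans (uIcc_subset_Icc ha hb))

lemma integral_congr_of_ae {f g : ℝ → En n} (h : f =ᵐ[muD d] g)
    {a b : ℝ} (ha : a ∈ Icc (-d) 0) (hb : b ∈ Icc (-d) 0) :
    ∫ s in a..b, f s = ∫ s in a..b, g s := by
  apply intervalIntegral.integral_congr_ae
  have h' : ∀ᵐ x ∂(volume : Measure ℝ), x ∈ Icc (-d) 0 → f x = g x :=
    (ae_restrict_iff' measurableSet_Icc).mp h
  filter_upwards [h'] with x hx hxI
  exact hx (uIoc_subset_uIcc.trans (uIcc_subset_Icc ha hb) hxI)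

end DelayAux

namespace DelayAux

def gf {d : ℝ} {n : ℕ} (y : Xsp d n) : ℝ → En n :=
  fun ξ => -fstX y - ∫ s in ξ..0, (sndX y : ℝ → En n) s

lemma continuousOn_prim (hd : 0 ≤ d) {f : ℝ → En n} (hf : MemLp f 2 (muD d)) :
    ContinuousOn (fun ξ => ∫ s in ξ..0, f s) (Icc (-d) 0) := by
  have h := intervalIntegral.continuousOn_primitive_interval_left (a := -d) (b := 0)
    (μ := volume) (f := f) ?_
  · rwa [uIcc_of_le (by linarith)] at h
  · rw [uIcc_of_le (by linarith)]
    exact integrableOn_of_memL2 hf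

lemma norm_prim_le {f : ℝ → En n} (hf : MemLp f 2 (muD d))
    {ξ : ℝ} (hξ : ξ ∈ Icc (-d) 0) :
    ‖∫ s in ξ..0, f s‖ ≤ ∫ s in Icc (-d) 0, ‖f s‖ := by
  refine (intervalIntegral.norm_integral_le_integral_norm_uIoc).trans ?_
  refine setIntegral_mono_set ((integrableOn_of_memL2 hf).norm) ?_ ?_
  · exact Filter.Eventually.of_forall fun x => norm_nonneg _
  · exact HasSubset.Subset.eventuallyLE
      (uIoc_subset_uIcc.trans (uIcc_subset_Icc hξ ⟨hξ.1.trans hξ.2, le_rfl⟩))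

lemma memℒp_gf (hd : 0 ≤ d) (y : Xsp d n) : MemLp (gf y) 2 (muD d) := by
  have hcont : ContinuousOn (gf y) (Icc (-d) 0) :=
    continuousOn_const.sub (continuousOn_prim hd (Lp.memLp (sndX y)))
  have hmeas : AEStronglyMeasurable (gf y) (muD d) := by
    rw [muD]; exact hcont.aestronglyMeasurable measurableSet_Icc
  refine MemLp.of_bound hmeas (‖fstX y‖ + ∫ s in Icc (-d) 0, ‖(sndX y : ℝ → En n) s‖) ?_
  have hmem : ∀ᵐ ξ ∂(muD d), ξ ∈ Icc (-d) 0 := by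
    rw [muD]; exact ae_restrict_mem measurableSet_Icc
  filter_upwards [hmem] with ξ hξ
  calc ‖gf y ξ‖ ≤ ‖-fstX y‖ + ‖∫ s in ξ..0, (sndX y : ℝ → En n) s‖ := norm_sub_le _ _
  _ ≤ ‖fstX y‖ + ∫ s in Icc (-d) 0, ‖(sndX y : ℝ → En n) s‖ := by
      rw [norm_neg]
      exact add_le_add le_rfl (norm_prim_le (Lp.memLp _) hξ)

end DelayAux

namespace DelayAux

lemma gf_add (hd : 0 ≤ d) (y z : Xsp d n) :
    gf (y + z) =ᵐ[muD d] gf y + gf z := by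
  have hmem : ∀ᵐ ξ ∂(muD d), ξ ∈ Icc (-d) 0 := by
    rw [muD]; exact ae_restrict_mem measurableSet_Icc
  filter_upwards [hmem] with ξ hξ
  have h0 : (0:ℝ) ∈ Icc (-d) 0 := ⟨by linarith, le_rfl⟩
  have hint : ∫ s in ξ..0, (sndX (y + z) : ℝ → En n) s
      = (∫ s in ξ..0, (sndX y : ℝ → En n) s) + ∫ s in ξ..0, (sndX z : ℝ → En n) s := by
    rw [show sndX (y + z) = sndX y + sndX z from rfl]
    rw [integral_congr_of_ae (Lp.coeFn_add (sndX y) (sndX z)) hξ h0]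
    exact intervalIntegral.integral_add
      (intervalIntegrable_of_memL2 (Lp.memLp _) hξ h0)
      (intervalIntegrable_of_memL2 (Lp.memLp _) hξ h0)
  show gf (y + z) ξ = gf y ξ + gf z ξ
  simp only [gf, hint, show fstX (y + z) = fstX y + fstX z from rfl]
  abel

lemma gf_smul (hd : 0 ≤ d) (c : ℝ) (y : Xsp d n) :
    gf (c • y) =ᵐ[muD d] c • gf y := by
  have hmem : ∀ᵐ ξ ∂(muD d), ξ ∈ Icc (-d) 0 := by
    rw [muD]; exact ae_restrict_mem measurableSet_Icc
  filter_upwards [hmem] with ξ hξ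
  have h0 : (0:ℝ) ∈ Icc (-d) 0 := ⟨by linarith, le_rfl⟩
  have hint : ∫ s in ξ..0, (sndX (c • y) : ℝ → En n) s
      = c • ∫ s in ξ..0, (sndX y : ℝ → En n) s := by
    have hae : ((c • sndX y : Lp (En n) 2 (muD d)) : ℝ → En n) =ᵐ[muD d]
        (fun s => c • (sndX y : ℝ → En n) s) := Lp.coeFn_smul c (sndX y)
    rw [show sndX (c • y) = c • sndX y from rfl]
    rw [integral_congr_of_ae hae hξ h0]
    exact intervalIntegral.integral_smul _ _
  show gf (c • y) ξ = c • gf y ξ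
  simp only [gf, hint, show fstX (c • y) = c • fstX y from rfl, smul_sub, smul_neg]

/-- `T` as a linear map. -/
def Tlin (d : ℝ) (hd : 0 ≤ d) (n : ℕ) : Xsp d n →ₗ[ℝ] Xsp d n where
  toFun y := (WithLp.equiv 2 _).symm (-(fstX y), (memℒp_gf hd y).toLp (gf y))
  map_add' y z := by
    have h2 : (memℒp_gf hd (y + z)).toLp (gf (y + z))
        = (memℒp_gf hd y).toLp (gf y) + (memℒp_gf hd z).toLp (gf z) := by
      rw [← MemLp.toLp_add]
      exact MemLp.toLp_congr _ _ (gf_add hd y z)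
    show (WithLp.equiv 2 _).symm _ = (WithLp.equiv 2 _).symm (_, _) + (WithLp.equiv 2 _).symm (_, _)
    rw [show ((WithLp.equiv 2 (En n × Lp (En n) 2 (muD d))).symm (-(fstX y), (memℒp_gf hd y).toLp (gf y)) + (WithLp.equiv 2 _).symm (-(fstX z), (memℒp_gf hd z).toLp (gf z)) : Xsp d n)
        = (WithLp.equiv 2 _).symm (-(fstX y) + -(fstX z), (memℒp_gf hd y).toLp (gf y) + (memℒp_gf hd z).toLp (gf z)) from rfl]
    congr 1
    refine Prod.ext ?_ ?_
    · show -(fstX (y + z)) = -(fstX y) + -(fstX z)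
      rw [show fstX (y + z) = fstX y + fstX z from rfl]; abel
    · exact h2
  map_smul' c y := by
    have h2 : (memℒp_gf hd (c • y)).toLp (gf (c • y))
        = c • (memℒp_gf hd y).toLp (gf y) := by
      exact (MemLp.toLp_congr (memℒp_gf hd (c • y)) ((memℒp_gf hd y).const_smul c)
        (gf_smul hd c y)).trans (MemLp.toLp_const_smul c (memℒp_gf hd y))
    show (WithLp.equiv 2 _).symm _ = c • (WithLp.equiv 2 _).symm (_, _)
    rw [show (c • (WithLp.equiv 2 (En n × Lp (En n) 2 (muD d))).symm (-(fstX y), (memℒp_gf hd y).toLp (gf y)) : Xsp d n)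
        = (WithLp.equiv 2 _).symm (c • -(fstX y), c • (memℒp_gf hd y).toLp (gf y)) from rfl]
    congr 1
    refine Prod.ext ?_ ?_
    · show -(fstX (c • y)) = c • -(fstX y)
      rw [show fstX (c • y) = c • fstX y from rfl, smul_neg]
    · exact h2

end DelayAux

namespace DelayAux

lemma integral_norm_le_sqrt (hd : 0 ≤ d) (f : Lp (En n) 2 (muD d)) :
    ∫ s in Icc (-d) 0, ‖(f : ℝ → En n) s‖ ≤ Real.sqrt d * ‖f‖ := by
  have h1 : ∫ s in Icc (-d) 0, ‖(f : ℝ → En n) s‖ = ((eLpNorm f 1 (muD d)).toReal) := by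
    rw [eLpNorm_one_eq_lintegral_enorm]
    exact integral_norm_eq_lintegral_enorm (Lp.aestronglyMeasurable f)
  have huniv : (muD d) univ = ENNReal.ofReal d := by
    rw [muD, Measure.restrict_apply_univ, Real.volume_Icc]
    norm_num
  have h2 : eLpNorm f 1 (muD d) ≤ eLpNorm f 2 (muD d) * (ENNReal.ofReal d) ^ (1/2 : ℝ) := by
    have := eLpNorm_le_eLpNorm_mul_rpow_measure_univ (μ := muD d) (f := (f : ℝ → En n))
      (by norm_num : (1:ℝ≥0∞) ≤ 2) (Lp.aestronglyMeasurable f)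
    rw [huniv] at this
    convert this using 3
    norm_num
  have hne : eLpNorm f 2 (muD d) * (ENNReal.ofReal d) ^ (1/2 : ℝ) ≠ ⊤ := by
    exact ENNReal.mul_ne_top (Lp.eLpNorm_ne_top f) (by
      exact ENNReal.rpow_ne_top_of_nonneg (by norm_num) ENNReal.ofReal_ne_top)
  rw [h1]
  calc (eLpNorm f 1 (muD d)).toReal
      ≤ (eLpNorm f 2 (muD d) * (ENNReal.ofReal d) ^ (1/2 : ℝ)).toReal :=
        ENNReal.toReal_mono hne h2
    _ = ‖f‖ * ((ENNReal.ofReal d) ^ (1/2 : ℝ)).toReal := by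
        rw [ENNReal.toReal_mul, Lp.norm_def]
    _ = Real.sqrt d * ‖f‖ := by
        rw [← ENNReal.toReal_rpow, ENNReal.toReal_ofReal hd, Real.sqrt_eq_rpow]
        ring

end DelayAux

namespace DelayAux

lemma norm_toLp_gf_le (hd : 0 ≤ d) (y : Xsp d n) :
    ‖(memℒp_gf hd y).toLp (gf y)‖
      ≤ Real.sqrt d * (‖fstX y‖ + ∫ s in Icc (-d) 0, ‖(sndX y : ℝ → En n) s‖) := by
  set C : ℝ := ‖fstX y‖ + ∫ s in Icc (-d) 0, ‖(sndX y : ℝ → En n) s‖ with hC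
  have hC0 : 0 ≤ C := by
    apply add_nonneg (norm_nonneg _)
    exact setIntegral_nonneg measurableSet_Icc fun x _ => norm_nonneg _
  have hbd : ∀ᵐ ξ ∂(muD d), ‖gf y ξ‖ ≤ C := by
    have hmem : ∀ᵐ ξ ∂(muD d), ξ ∈ Icc (-d) 0 := by
      rw [muD]; exact ae_restrict_mem measurableSet_Icc
    filter_upwards [hmem] with ξ hξ
    calc ‖gf y ξ‖ ≤ ‖-fstX y‖ + ‖∫ s in ξ..0, (sndX y : ℝ → En n) s‖ := norm_sub_le _ _
      _ ≤ C := by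
        rw [norm_neg]
        exact add_le_add le_rfl (norm_prim_le (Lp.memLp _) hξ)
  have h1 : eLpNorm (gf y) 2 (muD d) ≤ (muD d) univ ^ ((2:ℝ≥0∞).toReal)⁻¹ * ENNReal.ofReal C :=
    eLpNorm_le_of_ae_bound hbd
  have huniv : (muD d) univ = ENNReal.ofReal d := by
    rw [muD, Measure.restrict_apply_univ, Real.volume_Icc]; norm_num
  rw [Lp.norm_toLp]
  calc (eLpNorm (gf y) 2 (muD d)).toReal
      ≤ ((ENNReal.ofReal d) ^ ((2:ℝ≥0∞).toReal)⁻¹ * ENNReal.ofReal C).toReal := by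
        apply ENNReal.toReal_mono
        · exact ENNReal.mul_ne_top
            (ENNReal.rpow_ne_top_of_nonneg (by norm_num) ENNReal.ofReal_ne_top)
            ENNReal.ofReal_ne_top
        · rwa [huniv] at h1
    _ = Real.sqrt d * C := by
        rw [ENNReal.toReal_mul, ← ENNReal.toReal_rpow, ENNReal.toReal_ofReal hd,
          ENNReal.toReal_ofReal hC0, Real.sqrt_eq_rpow]
        norm_num

lemma fst_norm_le (x : Xsp d n) : ‖fstX x‖ ≤ ‖x‖ := by
  have h := WithLp.prod_norm_sq_eq_of_L2 x
  have h1 : ‖fstX x‖ = ‖x.fst‖ := rfl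
  nlinarith [norm_nonneg x.snd, norm_nonneg x, norm_nonneg x.fst, sq_nonneg ‖x.snd‖]

lemma snd_norm_le (x : Xsp d n) : ‖sndX x‖ ≤ ‖x‖ := by
  have h := WithLp.prod_norm_sq_eq_of_L2 x
  have h1 : ‖sndX x‖ = ‖x.snd‖ := rfl
  nlinarith [norm_nonneg x.fst, norm_nonneg x, norm_nonneg x.snd, sq_nonneg ‖x.fst‖]

end DelayAux

namespace DelayAux

lemma norm_Tlin_le (hd : 0 ≤ d) (y : Xsp d n) :
    ‖Tlin d hd n y‖ ≤ (1 + Real.sqrt d * (1 + Real.sqrt d)) * 2 * ‖y‖ := by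
  set T := Tlin d hd n y with hT
  have hfst : fstX T = -(fstX y) := rfl
  have hsnd : sndX T = (memℒp_gf hd y).toLp (gf y) := rfl
  have hsq := WithLp.prod_norm_sq_eq_of_L2 T
  have e1 : ‖T.fst‖ = ‖fstX y‖ := by
    rw [show T.fst = fstX T from rfl, hfst, norm_neg]
  have e2 : ‖T.snd‖ ≤ Real.sqrt d * (‖fstX y‖ + ∫ s in Icc (-d) 0, ‖(sndX y : ℝ → En n) s‖) := by
    rw [show T.snd = sndX T from rfl, hsnd]
    exact norm_toLp_gf_le hd y
  have e3 : ∫ s in Icc (-d) 0, ‖(sndX y : ℝ → En n) s‖ ≤ Real.sqrt d * ‖sndX y‖ :=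
    integral_norm_le_sqrt hd (sndX y)
  have e4 : ‖fstX y‖ ≤ ‖y‖ := fst_norm_le y
  have e5 : ‖sndX y‖ ≤ ‖y‖ := snd_norm_le y
  have hs : 0 ≤ Real.sqrt d := Real.sqrt_nonneg d
  have hTnn : 0 ≤ ‖T‖ := norm_nonneg _
  -- ‖T‖ ≤ ‖T.fst‖ + ‖T.snd‖
  have step : ‖T‖ ≤ ‖T.fst‖ + ‖T.snd‖ := by
    nlinarith [norm_nonneg T.fst, norm_nonneg T.snd]
  have hint_nn : 0 ≤ ∫ s in Icc (-d) 0, ‖(sndX y : ℝ → En n) s‖ :=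
    setIntegral_nonneg measurableSet_Icc fun x _ => norm_nonneg _
  nlinarith [norm_nonneg y, mul_le_mul_of_nonneg_left e3 hs, mul_le_mul_of_nonneg_left e4 hs,
    mul_le_mul_of_nonneg_left e5 (mul_nonneg hs hs)]

/-- `T` as a continuous linear map. -/
def Tclm (d : ℝ) (hd : 0 ≤ d) (n : ℕ) : Xsp d n →L[ℝ] Xsp d n :=
  (Tlin d hd n).mkContinuous _ (norm_Tlin_le hd)

lemma Tclm_fst (hd : 0 ≤ d) (y : Xsp d n) : fstX (Tclm d hd n y) = -(fstX y) := rfl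

lemma Tclm_snd (hd : 0 ≤ d) (y : Xsp d n) :
    sndX (Tclm d hd n y) = (memℒp_gf hd y).toLp (gf y) := rfl

lemma Tclm_snd_ae (hd : 0 ≤ d) (y : Xsp d n) :
    (sndX (Tclm d hd n y) : ℝ → En n) =ᵐ[muD d] gf y := by
  rw [Tclm_snd hd y]; exact MemLp.coeFn_toLp _

end DelayAux


namespace DelayAux

lemma isW12_gf (hd : 0 ≤ d) (y : Xsp d n) :
    IsW12 d (gf y) ((sndX y : ℝ → En n)) := by
  refine ⟨Lp.memLp _, fun ξ hξ => ?_⟩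
  have hmd : (-d) ∈ Icc (-d) 0 := ⟨le_rfl, by linarith⟩
  have h0 : (0:ℝ) ∈ Icc (-d) 0 := ⟨by linarith, le_rfl⟩
  have hch : (∫ s in (-d)..ξ, (sndX y : ℝ → En n) s) + ∫ s in ξ..0, (sndX y : ℝ → En n) s
      = ∫ s in (-d)..0, (sndX y : ℝ → En n) s :=
    intervalIntegral.integral_add_adjacent_intervals
      (intervalIntegrable_of_memL2 (Lp.memLp _) hmd hξ)
      (intervalIntegrable_of_memL2 (Lp.memLp _) hξ h0)
  show -fstX y - _ = (-fstX y - _) + _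
  rw [← hch]; abel

lemma gf_zero (y : Xsp d n) : gf y 0 = -fstX y := by
  simp [gf]

/-- For a `W^{1,2}` pair, `∫_ξ^0 g' = g 0 - g ξ`. -/
lemma integral_gder (hd : 0 ≤ d) {g g' : ℝ → En n} (hW : IsW12 d g g')
    {ξ : ℝ} (hξ : ξ ∈ Icc (-d) 0) :
    ∫ s in ξ..0, g' s = g 0 - g ξ := by
  have hmd : (-d) ∈ Icc (-d) 0 := ⟨le_rfl, by linarith⟩
  have h0 : (0:ℝ) ∈ Icc (-d) 0 := ⟨by linarith, le_rfl⟩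
  have hch : (∫ s in (-d)..ξ, g' s) + ∫ s in ξ..0, g' s = ∫ s in (-d)..0, g' s :=
    intervalIntegral.integral_add_adjacent_intervals
      (intervalIntegrable_of_memL2 hW.1 hmd hξ)
      (intervalIntegrable_of_memL2 hW.1 hξ h0)
  have e0 := hW.2 0 h0
  have eξ := hW.2 ξ hξ
  rw [e0, eξ, ← hch]; abel

end DelayAux

namespace DelayAux

open Metric Filter

lemma ae_zero_of_intervals (hd : 0 < d) {h : ℝ → En n}
    (hint : IntegrableOn h (Icc (-d) 0) volume)
    (hzero : ∀ a ∈ Icc (-d) 0, ∀ b ∈ Icc (-d) 0, a ≤ b → ∫ s in a..b, h s = 0) :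
    h =ᵐ[muD d] 0 := by
  set H : ℝ → En n := (Icc (-d) 0).indicator h with hH
  have HInt : Integrable H volume := hint.integrable_indicator measurableSet_Icc
  have key := IsUnifLocDoublingMeasure.ae_tendsto_average (μ := (volume : Measure ℝ))
    HInt.locallyIntegrable 1
  have main : ∀ᵐ x ∂(volume : Measure ℝ), x ∈ Ioo (-d) 0 → h x = 0 := by
    filter_upwards [key] with x hx hmem
    have hδ : Tendsto (id : ℝ → ℝ) (nhdsWithin 0 (Ioi 0)) (nhdsWithin 0 (Ioi 0)) := tendsto_id
    have hxin : ∀ᶠ j in nhdsWithin (0:ℝ) (Ioi 0), x ∈ closedBall x (1 * j) := by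
      filter_upwards [self_mem_nhdsWithin] with j hj
      rw [one_mul]
      exact mem_closedBall_self (le_of_lt hj)
    have htend : Tendsto (fun j => ⨍ s in closedBall x j, H s) (nhdsWithin (0:ℝ) (Ioi 0))
        (nhds (H x)) := hx (fun _ => x) id hδ hxin
    set ε : ℝ := min (x + d) (-x) with hε
    have hε0 : 0 < ε := lt_min (by linarith [hmem.1]) (by linarith [hmem.2])
    have hev : ∀ᶠ j in nhdsWithin (0:ℝ) (Ioi 0), (⨍ s in closedBall x j, H s) = 0 := by
      have hIoo : Ioo (0:ℝ) ε ∈ nhdsWithin (0:ℝ) (Ioi 0) :=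
        Ioo_mem_nhdsGT_of_mem ⟨le_rfl, hε0⟩
      filter_upwards [hIoo] with j hj
      have hsub : Icc (x - j) (x + j) ⊆ Icc (-d) 0 := by
        apply Icc_subset_Icc
        · have := hj.2; have := min_le_left (x + d) (-x); linarith [lt_of_lt_of_le hj.2 (min_le_left (x+d) (-x))]
        · linarith [lt_of_lt_of_le hj.2 (min_le_right (x+d) (-x))]
      have hball : closedBall x j = Icc (x - j) (x + j) := Real.closedBall_eq_Icc
      have hintzero : ∫ s in closedBall x j, H s = 0 := by
        rw [hball, hH, setIntegral_indicator measurableSet_Icc,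
          inter_eq_self_of_subset_left hsub, integral_Icc_eq_integral_Ioc,
          ← intervalIntegral.integral_of_le (by linarith [hj.1] : x - j ≤ x + j)]
        exact hzero _ (hsub ⟨le_rfl, by linarith [hj.1]⟩) _ (hsub ⟨by linarith [hj.1], le_rfl⟩)
          (by linarith [hj.1])
      rw [setAverage_eq, hintzero, smul_zero]
    have hzero' : Tendsto (fun j => ⨍ s in closedBall x j, H s) (nhdsWithin (0:ℝ) (Ioi 0))
        (nhds 0) := by
      rw [tendsto_congr' hev]; exact tendsto_const_nhds
    have hHx : H x = 0 := tendsto_nhds_unique htend hzero'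
    rw [hH, indicator_of_mem (Ioo_subset_Icc_self hmem)] at hHx
    exact hHx
  have h1 : ∀ᵐ x ∂(muD d), x ∈ Ioo (-d) 0 := by
    rw [muD, ae_iff]
    have : {x | ¬ x ∈ Ioo (-d) 0} = (Ioo (-d) 0)ᶜ := rfl
    rw [this, Measure.restrict_apply (measurableSet_Ioo.compl)]
    apply measure_mono_null (t := ({-d, 0} : Set ℝ)) ?_ ?_
    · intro x hx
      have hxc : x ∉ Ioo (-d) 0 := hx.1
      have hxI : x ∈ Icc (-d) 0 := hx.2
      by_cases hxd : x = -d
      · exact Or.inl hxd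
      · right
        by_contra hx0
        exact hxc ⟨lt_of_le_of_ne hxI.1 (Ne.symm hxd), lt_of_le_of_ne hxI.2 hx0⟩
    · exact ((Set.finite_singleton (0:ℝ)).insert (-d)).measure_zero _
  have h2 : ∀ᵐ x ∂(muD d), x ∈ Ioo (-d) 0 → h x = 0 := by
    rw [muD]; exact ae_restrict_of_ae main
  filter_upwards [h1, h2] with x hx1 hx2
  exact hx2 hx1

end DelayAux


open DelayAux


/-- **`T` is a bounded linear inverse of the delay operator `Ã`.**
The map `T(y₀,y₁) = (-y₀, ξ ↦ -y₀ - ∫_ξ^0 y₁(s) ds)` is a bounded linear operator on `X`;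
for every `y ∈ X` one has `Ty ∈ D(Ã)` and `Ã(Ty) = y`; for every `x ∈ D(Ã)` one has
`T(Ãx) = x`. Hence `T` is a linear bijection of `X` onto `D(Ã)`, i.e. `T = Ã⁻¹`. -/
theorem delay_operator_inverse (d : ℝ) (hd : 0 < d) (n : ℕ) :
    ∃ T : Xsp d n →L[ℝ] Xsp d n, SpecT d n T ∧
      -- `T y ∈ D(Ã)` with `Ã (T y) = y` for every `y`:
      (∀ y : Xsp d n, T y ∈ domA d n ∧
        ∃ g g' : ℝ → En n, IsW12 d g g' ∧ g 0 = fstX (T y) ∧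
          (sndX (T y) : ℝ → En n) =ᵐ[muD d] g ∧
          -fstX (T y) = fstX y ∧ (sndX y : ℝ → En n) =ᵐ[muD d] g') ∧
      -- `T (Ã x) = x` for every `x ∈ D(Ã)`: if `(g,g')` is a `W^{1,2}` representative of
      -- `x ∈ D(Ã)` and `z = Ã x = (-x₀, g')`, then `T z = x`:
      (∀ x z : Xsp d n, ∀ g g' : ℝ → En n, IsW12 d g g' → g 0 = fstX x →
        (sndX x : ℝ → En n) =ᵐ[muD d] g →
        fstX z = -fstX x → (sndX z : ℝ → En n) =ᵐ[muD d] g' → T z = x) ∧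
      -- `T` is a linear bijection of `X` onto `D(Ã)`:
      Function.Injective T ∧ Set.range T = domA d n := by
  set T := Tclm d hd.le n with hTdef
  have h0mem : (0:ℝ) ∈ Icc (-d) 0 := ⟨by linarith, le_rfl⟩
  have hmemae : ∀ᵐ ξ ∂(muD d), ξ ∈ Icc (-d) 0 := by
    rw [muD]; exact ae_restrict_mem measurableSet_Icc
  have hspec : SpecT d n T := fun y => ⟨Tclm_fst hd.le y, Tclm_snd_ae hd.le y⟩
  have hpart2 : ∀ y : Xsp d n, T y ∈ domA d n ∧
      ∃ g g' : ℝ → En n, IsW12 d g g' ∧ g 0 = fstX (T y) ∧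
        (sndX (T y) : ℝ → En n) =ᵐ[muD d] g ∧
        -fstX (T y) = fstX y ∧ (sndX y : ℝ → En n) =ᵐ[muD d] g' := by
    intro y
    have hg0 : gf y 0 = fstX (T y) := by rw [gf_zero, Tclm_fst hd.le]
    refine ⟨⟨gf y, (sndX y : ℝ → En n), isW12_gf hd.le y, hg0, Tclm_snd_ae hd.le y⟩,
      gf y, (sndX y : ℝ → En n), isW12_gf hd.le y, hg0, Tclm_snd_ae hd.le y, ?_, ?_⟩
    · rw [Tclm_fst hd.le, neg_neg]
    · exact Filter.EventuallyEq.rfl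
  have hpart3 : ∀ x z : Xsp d n, ∀ g g' : ℝ → En n, IsW12 d g g' → g 0 = fstX x →
      (sndX x : ℝ → En n) =ᵐ[muD d] g →
      fstX z = -fstX x → (sndX z : ℝ → En n) =ᵐ[muD d] g' → T z = x := by
    intro x z g g' hW hg0 hx hz0 hz1
    have hae : gf z =ᵐ[muD d] (sndX x : ℝ → En n) := by
      filter_upwards [hmemae, hx] with ξ hξ hxξ
      have hcong : ∫ s in ξ..0, (sndX z : ℝ → En n) s = ∫ s in ξ..0, g' s :=
        integral_congr_of_ae hz1 hξ h0mem
      have hder : ∫ s in ξ..0, g' s = g 0 - g ξ := integral_gder hd.le hW hξ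
      show -fstX z - _ = _
      rw [hcong, hder, hz0, neg_neg, hg0, hxξ]
      abel
    have hsnd : (memℒp_gf hd.le z).toLp (gf z) = sndX x :=
      (MemLp.toLp_congr (memℒp_gf hd.le z) (Lp.memLp (sndX x)) hae).trans
        (Lp.toLp_coeFn _ _)
    have hfst : -(fstX z) = fstX x := by rw [hz0, neg_neg]
    show (WithLp.equiv 2 _).symm (-(fstX z), (memℒp_gf hd.le z).toLp (gf z)) = x
    rw [hfst, hsnd]
    rfl
  have hinj : Function.Injective T := by
    intro y y' hTeq
    have hf : fstX y = fstX y' := by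
      have h := congrArg fstX hTeq
      rw [Tclm_fst hd.le, Tclm_fst hd.le] at h
      exact neg_injective h
    have hae : gf y =ᵐ[muD d] gf y' := by
      have h1 := Tclm_snd_ae hd.le y
      have h2 := Tclm_snd_ae hd.le y'
      have hs : sndX (T y) = sndX (T y') := by rw [hTeq]
      exact h1.symm.trans (hs ▸ h2)
    set Φ : ℝ → En n := fun ξ => ∫ s in ξ..0, (sndX y : ℝ → En n) s with hΦ
    set Φ' : ℝ → En n := fun ξ => ∫ s in ξ..0, (sndX y' : ℝ → En n) s with hΦ'
    have haeΦ : Φ =ᵐ[volume.restrict (Icc (-d) 0)] Φ' := by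
      have : Φ =ᵐ[muD d] Φ' := by
        filter_upwards [hae] with ξ hξ
        have hξ' : -fstX y - Φ ξ = -fstX y' - Φ' ξ := hξ
        rw [hf] at hξ'
        exact (sub_right_inj.mp hξ')
      exact this
    have hEq : EqOn Φ Φ' (Icc (-d) 0) :=
      Measure.eqOn_Icc_of_ae_eq (volume : Measure ℝ) (by linarith : (-d:ℝ) ≠ 0) haeΦ
        (continuousOn_prim hd.le (Lp.memLp _)) (continuousOn_prim hd.le (Lp.memLp _))
    have hzero : ∀ a ∈ Icc (-d) 0, ∀ b ∈ Icc (-d) 0, a ≤ b →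
        ∫ s in a..b, ((sndX y : ℝ → En n) s - (sndX y' : ℝ → En n) s) = 0 := by
      intro a ha b hb hab
      have i1 := intervalIntegrable_of_memL2 (Lp.memLp (sndX y)) ha hb
      have i2 := intervalIntegrable_of_memL2 (Lp.memLp (sndX y')) ha hb
      rw [intervalIntegral.integral_sub i1 i2]
      have c1 : ∫ s in a..b, (sndX y : ℝ → En n) s = Φ a - Φ b :=
        eq_sub_of_add_eq (intervalIntegral.integral_add_adjacent_intervals i1
          (intervalIntegrable_of_memL2 (Lp.memLp _) hb h0mem))
      have c2 : ∫ s in a..b, (sndX y' : ℝ → En n) s = Φ' a - Φ' b :=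
        eq_sub_of_add_eq (intervalIntegral.integral_add_adjacent_intervals i2
          (intervalIntegrable_of_memL2 (Lp.memLp _) hb h0mem))
      rw [c1, c2, hEq ha, hEq hb, sub_self]
    have hae0 : (fun s => (sndX y : ℝ → En n) s - (sndX y' : ℝ → En n) s) =ᵐ[muD d] 0 :=
      ae_zero_of_intervals hd
        ((integrableOn_of_memL2 (Lp.memLp _)).sub (integrableOn_of_memL2 (Lp.memLp _))) hzero
    have hsnd : sndX y = sndX y' := by
      apply Lp.ext (p := (2:ℝ≥0∞)) (μ := muD d)
      filter_upwards [hae0] with s hs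
      exact sub_eq_zero.mp hs
    exact (WithLp.equiv 2 _).injective (Prod.ext hf hsnd)
  refine ⟨T, hspec, hpart2, hpart3, hinj, ?_⟩
  apply Set.eq_of_subset_of_subset
  · rintro _ ⟨y, rfl⟩
    exact (hpart2 y).1
  · rintro x ⟨g, g', hW, hg0, hx⟩
    refine ⟨(WithLp.equiv 2 _).symm (-(fstX x), hW.1.toLp g'), ?_⟩
    exact hpart3 x _ g g' hW hg0 hx rfl (MemLp.coeFn_toLp hW.1)

end
end

section
/- The bounded linear operator T : X → X, T(y₀,y₁) = (−y₀, ξ ↦ −y₀ − ∫_ξ^0 y₁(s) ds), is a compact operator. -/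
open MeasureTheory Set
open scoped RealInnerProductSpace ENNReal

noncomputable section

open BoundedContinuousFunction

lemma muD_finite (d : ℝ) : IsFiniteMeasure (muD d) := by
  constructor
  rw [muD, Measure.restrict_apply_univ, Real.volume_Icc]
  exact ENNReal.ofReal_lt_top

lemma restrict_eq {d : ℝ} {s : Set ℝ} (hs : MeasurableSet s) (hsub : s ⊆ Icc (-d) 0) :
    (muD d).restrict s = volume.restrict s := by
  rw [muD, Measure.restrict_restrict hs, inter_eq_left.mpr hsub]

lemma integrableOn_of_subset {d : ℝ} {n : ℕ} (w : Lp (En n) 2 (muD d)) {s : Set ℝ}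
    (hs : MeasurableSet s) (hsub : s ⊆ Icc (-d) 0) :
    IntegrableOn (w : ℝ → En n) s volume := by
  haveI := muD_finite d
  have h2 : MemLp (w : ℝ → En n) 2 ((muD d).restrict s) := (Lp.memLp w).restrict s
  have := h2.integrable one_le_two
  rwa [restrict_eq hs hsub] at this

lemma norm_sq_integral {d : ℝ} {n : ℕ} (w : Lp (En n) 2 (muD d)) :
    ∫ s, ‖(w : ℝ → En n) s‖ ^ (2:ℝ) ∂(muD d) = ‖w‖ ^ 2 := by
  have h := MeasureTheory.L2.inner_def (𝕜 := ℝ) w w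
  rw [real_inner_self_eq_norm_sq] at h
  rw [h]
  refine integral_congr_ae (Filter.Eventually.of_forall fun s => ?_)
  show ‖(w : ℝ → En n) s‖ ^ (2:ℝ) = ⟪(w : ℝ → En n) s, (w : ℝ → En n) s⟫
  rw [real_inner_self_eq_norm_sq, show (2:ℝ) = ((2:ℕ):ℝ) by norm_num, Real.rpow_natCast]

lemma key_estimate {d : ℝ} {n : ℕ} (w : Lp (En n) 2 (muD d)) {a b : ℝ} (hab : a ≤ b)
    (hsub : Ioc a b ⊆ Icc (-d) 0) :
    ‖∫ s in a..b, (w : ℝ → En n) s‖ ≤ Real.sqrt (b - a) * ‖w‖ := by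
  haveI := muD_finite d
  set r : ℝ → En n := (w : ℝ → En n) with hr
  set μ' := (muD d).restrict (Ioc a b) with hμ'
  have hmeq : μ' = volume.restrict (Ioc a b) := restrict_eq measurableSet_Ioc hsub
  have hr2 : MemLp r 2 μ' := (Lp.memLp w).restrict _
  have h1 : ‖∫ s in a..b, r s‖ ≤ ∫ s in Ioc a b, ‖r s‖ ∂volume := by
    rw [intervalIntegral.integral_of_le hab]
    exact norm_integral_le_integral_norm r
  have h2 : ∫ s in Ioc a b, ‖r s‖ ∂volume = ∫ s, (fun _ => (1:ℝ)) s * ‖r s‖ ∂μ' := by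
    rw [hmeq]; simp
  have hpq : Real.HolderConjugate 2 2 := (Real.holderConjugate_iff_eq_conjExponent one_lt_two).2 (by norm_num)
  have hconst : MemLp (fun _ : ℝ => (1:ℝ)) (ENNReal.ofReal 2) μ' := by
    rw [ENNReal.ofReal_ofNat]; exact memLp_const 1
  have hnorm : MemLp (fun s => ‖r s‖) (ENNReal.ofReal 2) μ' := by
    rw [ENNReal.ofReal_ofNat]; exact hr2.norm
  have h3 := integral_mul_le_Lp_mul_Lq_of_nonneg hpq
    (Filter.Eventually.of_forall fun _ => zero_le_one)
    (Filter.Eventually.of_forall fun s => norm_nonneg _) hconst hnorm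
  have hA : ∫ s, (fun _ : ℝ => (1:ℝ)) s ^ (2:ℝ) ∂μ' = b - a := by
    simp only [Real.one_rpow]
    rw [integral_const, smul_eq_mul, mul_one, hmeq, measureReal_restrict_apply_univ,
      Real.volume_real_Ioc_of_le hab]
  have hint2 : Integrable (fun s => ‖r s‖ ^ (2:ℝ)) (muD d) := by
    have := (Lp.memLp w).integrable_norm_rpow two_ne_zero ENNReal.ofNat_ne_top
    simpa using this
  have hB : ∫ s, ‖r s‖ ^ (2:ℝ) ∂μ' ≤ ‖w‖ ^ 2 := by
    rw [← norm_sq_integral w]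
    exact integral_mono_measure Measure.restrict_le_self
      (Filter.Eventually.of_forall fun s => Real.rpow_nonneg (norm_nonneg _) _) hint2
  calc ‖∫ s in a..b, r s‖ ≤ ∫ s, (fun _ => (1:ℝ)) s * ‖r s‖ ∂μ' := by rw [← h2]; exact h1
    _ ≤ (∫ s, (fun _ : ℝ => (1:ℝ)) s ^ (2:ℝ) ∂μ') ^ (1/(2:ℝ)) *
        (∫ s, ‖r s‖ ^ (2:ℝ) ∂μ') ^ (1/(2:ℝ)) := h3
    _ ≤ (b - a) ^ (1/(2:ℝ)) * (‖w‖ ^ 2) ^ (1/(2:ℝ)) := by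
        rw [hA]
        exact mul_le_mul_of_nonneg_left
          (Real.rpow_le_rpow (by positivity) hB (by norm_num))
          (Real.rpow_nonneg (by linarith) _)
    _ = Real.sqrt (b - a) * ‖w‖ := by
        rw [← Real.sqrt_eq_rpow, ← Real.sqrt_eq_rpow, Real.sqrt_sq (norm_nonneg _)]

lemma norm_fstX_le {d : ℝ} {n : ℕ} (y : Xsp d n) : ‖fstX y‖ ≤ ‖y‖ := by
  rw [WithLp.prod_norm_eq_of_L2]
  calc ‖fstX y‖ = Real.sqrt (‖fstX y‖ ^ 2) := (Real.sqrt_sq (norm_nonneg _)).symm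
    _ ≤ _ := Real.sqrt_le_sqrt (le_add_of_nonneg_right (sq_nonneg _))

lemma norm_sndX_le {d : ℝ} {n : ℕ} (y : Xsp d n) : ‖sndX y‖ ≤ ‖y‖ := by
  rw [WithLp.prod_norm_eq_of_L2]
  calc ‖sndX y‖ = Real.sqrt (‖sndX y‖ ^ 2) := (Real.sqrt_sq (norm_nonneg _)).symm
    _ ≤ _ := Real.sqrt_le_sqrt (le_add_of_nonneg_left (sq_nonneg _))

/-- **Compactness of `T = Ã⁻¹`.**
The bounded linear operator `T : X → X`, `T(y₀,y₁) = (-y₀, ξ ↦ -y₀ - ∫_ξ^0 y₁(s) ds)`,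
is a compact operator. -/
theorem delay_operator_inverse_compact (d : ℝ) (hd : 0 < d) (n : ℕ)
    (T : Xsp d n →L[ℝ] Xsp d n) (hT : SpecT d n T) :
    IsCompactOperator T := by
  classical
  haveI := muD_finite d
  have hd0 : (-d : ℝ) ≤ 0 := by linarith
  have h0I : (0:ℝ) ∈ Icc (-d) 0 := ⟨hd0, le_refl 0⟩
  set projCM : C(ℝ, (Icc (-d) (0:ℝ) : Set ℝ)) :=
    ⟨fun t => projIcc (-d) 0 hd0 t, continuous_projIcc⟩ with hprojCM
  set CB : ℝ := 1 + Real.sqrt d with hCB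
  have hCB0 : 0 ≤ CB := by positivity
  set A : Set ((Icc (-d) (0:ℝ) : Set ℝ) →ᵇ En n) :=
    {f | (∀ x, ‖f x‖ ≤ CB) ∧ ∀ x y, dist (f x) (f y) ≤ Real.sqrt (dist x y)} with hA
  -- Arzelà–Ascoli
  have hAcomp : IsCompact (closure A) := by
    refine BoundedContinuousFunction.arzela_ascoli
      (Metric.closedBall (0 : En n) CB) (isCompact_closedBall 0 CB) A
      (fun f x hf => ?_) (fun x₀ => ?_)
    · exact Metric.mem_closedBall.2 (by simpa [dist_eq_norm] using hf.1 x)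
    · rw [Metric.equicontinuousAt_iff]
      intro ε hε
      refine ⟨ε ^ 2, by positivity, fun x hx fa => ?_⟩
      rw [dist_comm]
      calc dist ((fa : _ →ᵇ En n) x) ((fa : _ →ᵇ En n) x₀)
          ≤ Real.sqrt (dist x x₀) := fa.2.2 x x₀
        _ < Real.sqrt (ε ^ 2) := Real.sqrt_lt_sqrt dist_nonneg hx
        _ = ε := Real.sqrt_sq hε.le
  -- The continuous parametrization map
  set Ψ : En n × ((Icc (-d) (0:ℝ) : Set ℝ) →ᵇ En n) → Xsp d n := fun z =>
    (WithLp.equiv 2 _).symm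
      (z.1, BoundedContinuousFunction.toLp (E := En n) 2 (muD d) ℝ (z.2.compContinuous projCM))
    with hΨdef
  have hΨ : Continuous Ψ := by
    have h1 : Continuous fun z : En n × ((Icc (-d) (0:ℝ) : Set ℝ) →ᵇ En n) =>
        (z.1, BoundedContinuousFunction.toLp (E := En n) 2 (muD d) ℝ
          (z.2.compContinuous projCM)) :=
      continuous_fst.prodMk
        ((BoundedContinuousFunction.toLp (E := En n) 2 (muD d) ℝ).continuous.comp
          ((BoundedContinuousFunction.lipschitz_compContinuous projCM).continuous.comp
            continuous_snd))
    exact (WithLp.prodContinuousLinearEquiv 2 ℝ (En n) (Lp (En n) 2 (muD d))).symm.continuous.comp h1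
  refine ⟨Ψ '' (Metric.closedBall 0 1 ×ˢ closure A),
    ((isCompact_closedBall _ _).prod hAcomp).image hΨ, ?_⟩
  refine Filter.mem_of_superset (Metric.closedBall_mem_nhds (0 : Xsp d n) one_pos) ?_
  intro y hy
  have hy1 : ‖y‖ ≤ 1 := by rwa [Metric.mem_closedBall, dist_zero_right] at hy
  have hy0 : ‖fstX y‖ ≤ 1 := (norm_fstX_le y).trans hy1
  have hyw : ‖sndX y‖ ≤ 1 := (norm_sndX_le y).trans hy1
  set w : Lp (En n) 2 (muD d) := sndX y with hw
  set g : ℝ → En n := fun t => -fstX y - ∫ s in t..0, (w : ℝ → En n) s with hgdef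
  -- interval integrability on subintervals of [-d,0]
  have hii : ∀ u v : ℝ, u ∈ Icc (-d) (0:ℝ) → v ∈ Icc (-d) (0:ℝ) →
      IntervalIntegrable (w : ℝ → En n) volume u v := by
    intro u v hu hv
    rw [intervalIntegrable_iff]
    exact integrableOn_of_subset w measurableSet_uIoc
      (fun s hs => (uIcc_subset_Icc hu hv) (Ioc_subset_Icc_self hs))
  -- the modulus of continuity
  have hmod0 : ∀ x ∈ Icc (-d) (0:ℝ), ∀ x' ∈ Icc (-d) (0:ℝ), x' ≤ x →
      dist (g x) (g x') ≤ Real.sqrt (dist x x') * ‖w‖ := by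
    intro x hx x' hx' hle
    have hadd := intervalIntegral.integral_add_adjacent_intervals (μ := volume)
      (f := (w : ℝ → En n)) (hii x' x hx' hx) (hii x 0 hx h0I)
    have hdiff : g x - g x' = ∫ s in x'..x, (w : ℝ → En n) s := by
      simp only [hgdef]
      rw [← hadd]
      abel
    rw [dist_eq_norm, hdiff, Real.dist_eq, abs_of_nonneg (by linarith)]
    exact key_estimate w hle (fun s hs => ⟨le_trans hx'.1 hs.1.le, le_trans hs.2 hx.2⟩)
  have hmod : ∀ x ∈ Icc (-d) (0:ℝ), ∀ x' ∈ Icc (-d) (0:ℝ),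
      dist (g x) (g x') ≤ Real.sqrt (dist x x') * ‖w‖ := by
    intro x hx x' hx'
    rcases le_total x' x with h | h
    · exact hmod0 x hx x' hx' h
    · rw [dist_comm, dist_comm x x']; exact hmod0 x' hx' x hx h
  -- continuity of g restricted to the interval
  have hcont : Continuous fun x : (Icc (-d) (0:ℝ) : Set ℝ) => g ↑x := by
    rw [Metric.continuous_iff]
    intro x ε hε
    have hM : (0:ℝ) < ‖w‖ + 1 := by positivity
    refine ⟨(ε / (‖w‖ + 1)) ^ 2, by positivity, fun u hu => ?_⟩
    have h1 : dist (g ↑u) (g ↑x) ≤ Real.sqrt (dist (u:ℝ) (x:ℝ)) * ‖w‖ :=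
      hmod u u.2 x x.2
    have h2 : Real.sqrt (dist (u:ℝ) (x:ℝ)) < ε / (‖w‖ + 1) := by
      have : dist (u:ℝ) (x:ℝ) < (ε / (‖w‖ + 1)) ^ 2 := by
        rwa [Subtype.dist_eq] at hu
      calc Real.sqrt (dist (u:ℝ) (x:ℝ)) < Real.sqrt ((ε / (‖w‖ + 1)) ^ 2) :=
            Real.sqrt_lt_sqrt dist_nonneg this
        _ = ε / (‖w‖ + 1) := Real.sqrt_sq (by positivity)
    calc dist (g ↑u) (g ↑x) ≤ Real.sqrt (dist (u:ℝ) (x:ℝ)) * ‖w‖ := h1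
      _ ≤ Real.sqrt (dist (u:ℝ) (x:ℝ)) * (‖w‖ + 1) := by
          exact mul_le_mul_of_nonneg_left (by linarith) (Real.sqrt_nonneg _)
      _ < (ε / (‖w‖ + 1)) * (‖w‖ + 1) := by
          exact mul_lt_mul_of_pos_right h2 hM
      _ = ε := div_mul_cancel₀ ε hM.ne'
  -- pointwise bound
  have hbound : ∀ x : (Icc (-d) (0:ℝ) : Set ℝ), ‖g ↑x‖ ≤ CB := by
    intro x
    have h1 : ‖∫ s in (x:ℝ)..0, (w : ℝ → En n) s‖ ≤ Real.sqrt (0 - (x:ℝ)) * ‖w‖ :=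
      key_estimate w x.2.2 (fun s hs => ⟨le_trans x.2.1 hs.1.le, hs.2⟩)
    have h2 : Real.sqrt (0 - (x:ℝ)) ≤ Real.sqrt d := by
      apply Real.sqrt_le_sqrt; have := x.2.1; linarith
    calc ‖g ↑x‖ = ‖-fstX y - ∫ s in (x:ℝ)..0, (w : ℝ → En n) s‖ := rfl
      _ ≤ ‖-fstX y‖ + ‖∫ s in (x:ℝ)..0, (w : ℝ → En n) s‖ := norm_sub_le _ _
      _ ≤ 1 + Real.sqrt d * 1 := by
          rw [norm_neg]
          refine add_le_add hy0 (h1.trans ?_)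
          exact mul_le_mul h2 hyw (norm_nonneg _) (Real.sqrt_nonneg _)
      _ = CB := by rw [hCB]; ring
  set f : (Icc (-d) (0:ℝ) : Set ℝ) →ᵇ En n :=
    BoundedContinuousFunction.mkOfBound ⟨fun x => g ↑x, hcont⟩ (2 * CB)
      (fun x x' => by
        calc dist (g ↑x) (g ↑x') ≤ ‖g ↑x‖ + ‖g ↑x'‖ := dist_le_norm_add_norm _ _
          _ ≤ 2 * CB := by have := hbound x; have := hbound x'; linarith) with hfdef
  have hfA : f ∈ A := by
    constructor
    · exact fun x => hbound x
    · intro x x'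
      have h1 : dist (f x) (f x') ≤ Real.sqrt (dist (x:ℝ) (x':ℝ)) * ‖w‖ :=
        hmod x x.2 x' x'.2
      rw [Subtype.dist_eq]
      calc dist (f x) (f x') ≤ Real.sqrt (dist (x:ℝ) (x':ℝ)) * ‖w‖ := h1
        _ ≤ Real.sqrt (dist (x:ℝ) (x':ℝ)) * 1 :=
            mul_le_mul_of_nonneg_left hyw (Real.sqrt_nonneg _)
        _ = Real.sqrt (dist (x:ℝ) (x':ℝ)) := mul_one _
  refine ⟨(-fstX y, f), ⟨?_, subset_closure hfA⟩, ?_⟩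
  · rw [Metric.mem_closedBall, dist_zero_right, norm_neg]; exact hy0
  -- Ψ (-fstX y, f) = T y
  have hTy1 := (hT y).1
  have hTy2 := (hT y).2
  have hkey : BoundedContinuousFunction.toLp (E := En n) 2 (muD d) ℝ
      (f.compContinuous projCM) = sndX (T y) := by
    apply Lp.ext
    have hc := BoundedContinuousFunction.coeFn_toLp (E := En n) 2 (muD d) ℝ
      (f.compContinuous projCM)
    have hmem : ∀ᵐ ξ ∂(muD d), ξ ∈ Icc (-d) (0:ℝ) :=
      ae_restrict_mem measurableSet_Icc
    filter_upwards [hc, hTy2, hmem] with ξ h1 h2 h3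
    rw [h1, h2]
    show f (projCM ξ) = g ξ
    rw [hprojCM]
    show f (projIcc (-d) 0 hd0 ξ) = g ξ
    rw [projIcc_of_mem hd0 h3]
    rfl
  show Ψ (-fstX y, f) = T y
  rw [hΨdef]
  show (WithLp.equiv 2 _).symm
    (-fstX y, BoundedContinuousFunction.toLp (E := En n) 2 (muD d) ℝ
      (f.compContinuous projCM)) = T y
  rw [hkey, ← hTy1]
  show (WithLp.equiv 2 _).symm (fstX (T y), sndX (T y)) = T y
  rfl
end
end

section
/- Let B := T* ∘ T, where T* is the Hilbert-space adjoint of T. Then B is self-adjoint, ⟨Bx, x⟩_X > 0 for every x ∈ X with x ≠ 0, and ⟨Tx, x⟩_X ≤ 0 for every x ∈ X. (Since Ã*B = Ã⁻¹ = T, the last inequality says ⟨Ã*Bx, x⟩_X ≤ 0, i.e. Ã satisfies the weak B-condition with constant C₀ = 0.) -/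
open MeasureTheory Set
open scoped RealInnerProductSpace ENNReal

noncomputable section

instance (d : ℝ) : IsFiniteMeasure (muD d) := by
  constructor
  rw [muD, Measure.restrict_apply_univ, Real.volume_Icc]
  exact ENNReal.ofReal_lt_top

section Helpers

variable {d : ℝ} {n : ℕ}

lemma Ioi_inter (ξ : ℝ) (hξ : ξ ∈ Icc (-d) 0) : Ioi ξ ∩ Icc (-d) 0 = Ioc ξ 0 := by
  ext s
  simp only [mem_inter_iff, mem_Ioi, mem_Icc, mem_Ioc]
  constructor
  · rintro ⟨h1, _, h3⟩; exact ⟨h1, h3⟩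
  · rintro ⟨h1, h2⟩; exact ⟨h1, by linarith [hξ.1], h2⟩

lemma G_eq_Ioi (f : ℝ → En n) (ξ : ℝ) (hξ : ξ ∈ Icc (-d) 0) :
    (∫ s in ξ..0, f s) = ∫ s in Ioi ξ, f s ∂(muD d) := by
  rw [intervalIntegral.integral_of_le hξ.2]
  have : (muD d).restrict (Ioi ξ) = volume.restrict (Ioc ξ 0) := by
    rw [muD, Measure.restrict_restrict measurableSet_Ioi, Ioi_inter ξ hξ]
  rw [this]

lemma G_eq_Ici (f : ℝ → En n) (ξ : ℝ) (hξ : ξ ∈ Icc (-d) 0) :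
    (∫ s in ξ..0, f s) = ∫ s in Ici ξ, f s ∂(muD d) := by
  rw [intervalIntegral.integral_of_le hξ.2]
  have : (muD d).restrict (Ici ξ) = volume.restrict (Icc ξ 0) := by
    rw [muD, Measure.restrict_restrict measurableSet_Ici]
    congr 1
    ext s
    simp only [mem_inter_iff, mem_Ici, mem_Icc]
    constructor
    · rintro ⟨h1, _, h3⟩; exact ⟨h1, h3⟩
    · rintro ⟨h1, h2⟩; exact ⟨h1, by linarith [hξ.1], h2⟩
  rw [this, integral_Icc_eq_integral_Ioc]

lemma key_triangle (f : ℝ → En n) (hfi : Integrable f (muD d)) :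
    Integrable (fun ξ => (⟪(∫ s in ξ..0, f s), f ξ⟫ : ℝ)) (muD d) ∧
    (∫ ξ, ⟪(∫ s in ξ..0, f s), f ξ⟫ ∂(muD d))
      = ⟪∫ s, f s ∂(muD d), ∫ s, f s ∂(muD d)⟫ / 2 := by
  set μ := muD d with hμ
  set A := ∫ s, f s ∂μ with hA
  set K : ℝ × ℝ → ℝ := {p : ℝ × ℝ | p.1 < p.2}.indicator (fun p => ⟪f p.2, f p.1⟫) with hK
  -- integrability of the full kernel
  have hmeas : AEStronglyMeasurable (fun p : ℝ × ℝ => (⟪f p.2, f p.1⟫ : ℝ)) (μ.prod μ) :=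
    AEStronglyMeasurable.inner hfi.1.comp_snd hfi.1.comp_fst
  have hbound : Integrable (fun p : ℝ × ℝ => ‖f p.1‖ * ‖f p.2‖) (μ.prod μ) :=
    hfi.norm.mul_prod hfi.norm
  have hK0 : Integrable (fun p : ℝ × ℝ => (⟪f p.2, f p.1⟫ : ℝ)) (μ.prod μ) := by
    refine hbound.mono' hmeas (Filter.Eventually.of_forall fun p => ?_)
    calc ‖(⟪f p.2, f p.1⟫ : ℝ)‖ ≤ ‖f p.2‖ * ‖f p.1‖ := norm_inner_le_norm _ _
    _ = ‖f p.1‖ * ‖f p.2‖ := mul_comm _ _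
  have hKint : Integrable K (μ.prod μ) :=
    hK0.indicator (measurableSet_lt measurable_fst measurable_snd)
  -- a.e. membership
  have hae : ∀ᵐ ξ ∂μ, ξ ∈ Icc (-d) 0 := ae_restrict_mem measurableSet_Icc
  have hptwise : ∀ ξ ∈ Icc (-d) 0, (∫ s, K (ξ, s) ∂μ) = ⟪(∫ s in ξ..0, f s), f ξ⟫ := by
    intro ξ hξ
    have h1 : (fun s => K (ξ, s)) = (Ioi ξ).indicator (fun s => ⟪f s, f ξ⟫) := by
      ext s
      simp only [hK, Set.indicator_apply, mem_setOf_eq, mem_Ioi]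
    have hres : μ.restrict (Ioi ξ) = volume.restrict (Ioc ξ 0) := by
      rw [hμ, muD, Measure.restrict_restrict measurableSet_Ioi, Ioi_inter ξ hξ]
    have hfi' : Integrable f (volume.restrict (Ioc ξ 0)) := by
      rw [← hres]; exact hfi.restrict
    rw [h1, integral_indicator measurableSet_Ioi, hres,
      intervalIntegral.integral_of_le hξ.2, real_inner_comm]
    calc (∫ x in Ioc ξ 0, ⟪f x, f ξ⟫)
        = ∫ x in Ioc ξ 0, ⟪f ξ, f x⟫ := by
          refine integral_congr_ae (Filter.Eventually.of_forall fun x => ?_)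
          exact real_inner_comm _ _
      _ = ⟪f ξ, ∫ x in Ioc ξ 0, f x⟫ := integral_inner hfi' (f ξ)
  -- Step 1 : I = iterated integral of K
  have step1 : (∫ ξ, ⟪(∫ s in ξ..0, f s), f ξ⟫ ∂μ) = ∫ ξ, (∫ s, K (ξ, s) ∂μ) ∂μ := by
    refine (integral_congr_ae ?_).symm
    filter_upwards [hae] with ξ hξ
    exact hptwise ξ hξ
  -- Step 2 : Fubini
  have step2 : (∫ ξ, (∫ s, K (ξ, s) ∂μ) ∂μ) = ∫ s, (∫ ξ, K (ξ, s) ∂μ) ∂μ :=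
    integral_integral_swap hKint
  -- Step 3 : the swapped inner integral
  have step3 : (∫ s, (∫ ξ, K (ξ, s) ∂μ) ∂μ)
      = ∫ s, (⟪f s, A⟫ - ⟪(∫ u in s..0, f u), f s⟫) ∂μ := by
    refine integral_congr_ae ?_
    filter_upwards [hae] with s hs
    have h1 : (fun ξ => K (ξ, s)) = (Iio s).indicator (fun ξ => ⟪f s, f ξ⟫) := by
      ext ξ
      simp only [hK, Set.indicator_apply, mem_setOf_eq, mem_Iio]
    rw [h1, integral_indicator measurableSet_Iio]
    rw [integral_inner (hfi.restrict) (f s)]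
    have hsplit : (∫ ξ in Iio s, f ξ ∂μ) = A - ∫ ξ in Ici s, f ξ ∂μ := by
      have := integral_add_compl (measurableSet_Iio (a := s)) hfi
      rw [compl_Iio] at this
      rw [hA, ← this]; abel
    rw [hsplit, G_eq_Ici f s hs, inner_sub_right, real_inner_comm (f s) (∫ ξ in Ici s, f ξ ∂μ)]
  -- integrability of pieces
  have hint1 : Integrable (fun s => (⟪f s, A⟫ : ℝ)) μ := hfi.inner_const A
  have hint2 : Integrable (fun ξ => (⟪(∫ s in ξ..0, f s), f ξ⟫ : ℝ)) μ := by
    refine (hKint.integral_prod_left).congr ?_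
    filter_upwards [hae] with ξ hξ
    exact hptwise ξ hξ
  have step4 : (∫ s, (⟪f s, A⟫ - ⟪(∫ u in s..0, f u), f s⟫) ∂μ)
      = ⟪A, A⟫ - ∫ ξ, ⟪(∫ s in ξ..0, f s), f ξ⟫ ∂μ := by
    rw [integral_sub hint1 hint2]
    congr 1
    calc (∫ s, (⟪f s, A⟫ : ℝ) ∂μ) = ∫ s, (⟪A, f s⟫ : ℝ) ∂μ := by
          refine integral_congr_ae (Filter.Eventually.of_forall fun x => ?_)
          exact real_inner_comm _ _
      _ = ⟪A, ∫ s, f s ∂μ⟫ := integral_inner hfi A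
      _ = ⟪A, A⟫ := by rw [← hA]
  refine ⟨hint2, ?_⟩
  have := step1.trans (step2.trans (step3.trans step4))
  linarith

lemma f_ae_zero (hd : 0 < d) (f : ℝ → En n) (hfi : Integrable f (muD d))
    (hG : (fun ξ => ∫ s in ξ..0, f s) =ᵐ[muD d] 0) : f =ᵐ[muD d] 0 := by
  set S : Set ℝ := Icc (-d) 0 with hS
  set ft : ℝ → En n := S.indicator f with hft
  have hfti : Integrable ft volume := by
    refine IntegrableOn.integrable_indicator ?_ measurableSet_Icc
    exact hfi
  have hInt : ∀ a b : ℝ, IntervalIntegrable ft volume a b :=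
    fun a b => hfti.intervalIntegrable
  set Gt : ℝ → En n := fun ξ => ∫ s in ξ..0, ft s with hGt
  have hGt_cont : Continuous Gt := by
    have h1 : Continuous (fun ξ => ∫ s in (0:ℝ)..ξ, ft s) :=
      intervalIntegral.continuous_primitive hInt 0
    have h2 : Gt = fun ξ => -∫ s in (0:ℝ)..ξ, ft s := by
      funext ξ; exact intervalIntegral.integral_symm 0 ξ
    rw [h2]; exact h1.neg
  -- ft agrees with f on S, so Gt ξ = ∫ ξ..0 f for ξ ∈ S
  have hagree : ∀ ξ ∈ S, Gt ξ = ∫ s in ξ..0, f s := by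
    intro ξ hξ
    refine intervalIntegral.integral_congr ?_
    intro s hs
    rw [uIcc_of_le hξ.2] at hs
    exact indicator_of_mem (show s ∈ S from ⟨by linarith [hξ.1, hs.1], hs.2⟩) f
  set D : Set ℝ := {ξ | ξ ∈ S ∧ Gt ξ = 0} with hD
  have hDae : ∀ᵐ ξ ∂(muD d), ξ ∈ D := by
    filter_upwards [hG, ae_restrict_mem (μ := volume) measurableSet_Icc] with ξ h1 h2
    refine ⟨h2, ?_⟩
    rw [hagree ξ h2]
    simpa using h1
  have hD0 : (muD d) {ξ | ξ ∉ D} = 0 := hDae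
  -- D is dense in S
  have hdense : ∀ x ∈ S, x ∈ closure D := by
    intro x hx
    rw [Metric.mem_closure_iff]
    intro ε hε
    by_contra hcon
    push_neg at hcon
    set a := max (-d) (x - ε) with ha
    set b := min 0 (x + ε) with hb
    have hx1 : -d ≤ x := hx.1
    have hx2 : x ≤ 0 := hx.2
    have hab : a < b :=
      lt_min (max_lt (by linarith) (by linarith))
        (max_lt (by linarith) (by linarith))
    have hsub : Ioo a b ⊆ {ξ | ξ ∉ D} := by
      intro y hy hyD
      have h1 : b ≤ x + ε := min_le_right _ _
      have h2 : x - ε ≤ a := le_max_right _ _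
      have hlt : dist x y < ε := by
        rw [Real.dist_eq, abs_lt]
        exact ⟨by linarith [hy.2], by linarith [hy.1]⟩
      exact absurd (hcon y hyD) (not_le.2 hlt)
    have hpos : 0 < (muD d) (Ioo a b) := by
      rw [muD, Measure.restrict_apply measurableSet_Ioo]
      have hss : Ioo a b ∩ Icc (-d) 0 = Ioo a b := by
        refine inter_eq_self_of_subset_left ?_
        intro y hy
        have h1 : -d ≤ a := le_max_left _ _
        have h2 : b ≤ 0 := min_le_left _ _
        exact ⟨by linarith [hy.1], by linarith [hy.2]⟩
      rw [hss, Real.volume_Ioo]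
      exact ENNReal.ofReal_pos.2 (by linarith)
    have hz : (muD d) (Ioo a b) = 0 := measure_mono_null hsub hD0
    rw [hz] at hpos
    exact lt_irrefl 0 hpos
  -- Gt vanishes on S
  have hGtS : ∀ ξ ∈ S, Gt ξ = 0 := by
    intro ξ hξ
    have hclosed : IsClosed {x : ℝ | Gt x = 0} := isClosed_eq hGt_cont continuous_const
    have hsub : closure D ⊆ {x : ℝ | Gt x = 0} := by
      rw [← hclosed.closure_eq]
      exact closure_mono (fun y hy => hy.2)
    exact hsub (hdense ξ hξ)
  -- auxiliary : ft integrates to zero over intervals outside S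
  have hout_left : ∀ ξ : ℝ, ξ ≤ -d → (∫ s in ξ..(-d), ft s) = 0 := by
    intro ξ hξ
    rw [intervalIntegral.integral_of_le hξ, integral_Ioc_eq_integral_Ioo]
    refine integral_eq_zero_of_ae ?_
    filter_upwards [ae_restrict_mem measurableSet_Ioo] with s hs
    refine indicator_of_notMem ?_ f
    intro hsS
    have h1 := hsS.1
    have h2 := hs.2
    linarith
  have hout_right : ∀ ξ : ℝ, 0 ≤ ξ → (∫ s in (0:ℝ)..ξ, ft s) = 0 := by
    intro ξ hξ
    rw [intervalIntegral.integral_of_le hξ]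
    refine integral_eq_zero_of_ae ?_
    filter_upwards [ae_restrict_mem measurableSet_Ioc] with s hs
    refine indicator_of_notMem ?_ f
    intro hsS
    have h1 := hsS.2
    have h2 := hs.1
    linarith
  -- Gt vanishes everywhere
  have hGtAll : ∀ ξ : ℝ, Gt ξ = 0 := by
    intro ξ
    rcases le_or_gt ξ (-d) with h | h
    · have hadd := intervalIntegral.integral_add_adjacent_intervals
        (hInt ξ (-d)) (hInt (-d) 0)
      have h1 : Gt ξ = (∫ s in ξ..(-d), ft s) + ∫ s in (-d)..0, ft s := hadd.symm
      have hmd : (∫ s in (-d)..0, ft s) = 0 := hGtS (-d) ⟨le_refl _, by linarith⟩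
      rw [h1, hout_left ξ h, hmd, zero_add]
    · rcases le_or_gt ξ 0 with h' | h'
      · exact hGtS ξ ⟨h.le, h'⟩
      · have : Gt ξ = -∫ s in (0:ℝ)..ξ, ft s := intervalIntegral.integral_symm 0 ξ
        rw [this, hout_right ξ h'.le, neg_zero]
  -- all interval integrals of ft vanish
  have hIab : ∀ a b : ℝ, (∫ s in a..b, ft s) = 0 := by
    intro a b
    have hadd := intervalIntegral.integral_add_adjacent_intervals
      (hInt a 0) (hInt 0 b)
    have h1 : (∫ s in (0:ℝ)..b, ft s) = -Gt b := by
      rw [intervalIntegral.integral_symm b 0]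
    have h2 : (∫ s in a..b, ft s) = Gt a + -Gt b := by
      rw [← hadd, h1]
    rw [h2, hGtAll a, hGtAll b, neg_zero, add_zero]
  -- Lebesgue differentiation
  have hft0 : ∀ᵐ x ∂(volume : Measure ℝ), ft x = 0 := by
    filter_upwards [IsUnifLocDoublingMeasure.ae_tendsto_average
      (μ := (volume : Measure ℝ)) hfti.locallyIntegrable 1] with x hx
    have hlim := hx (fun _ : ℝ => x) id Filter.tendsto_id ?_
    · have hzero : ∀ᶠ j in nhdsWithin (0:ℝ) (Ioi 0),
          (⨍ y in Metric.closedBall x j, ft y) = 0 := by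
        filter_upwards [self_mem_nhdsWithin] with j hj
        have hj0 : (0:ℝ) < j := hj
        rw [setAverage_eq]
        have : (∫ y in Metric.closedBall x j, ft y) = 0 := by
          rw [Real.closedBall_eq_Icc, integral_Icc_eq_integral_Ioc,
            ← intervalIntegral.integral_of_le (by linarith : x - j ≤ x + j)]
          exact hIab _ _
        rw [this, smul_zero]
      have h0 : Filter.Tendsto (fun j => (⨍ y in Metric.closedBall x j, ft y))
          (nhdsWithin (0:ℝ) (Ioi 0)) (nhds 0) := by
        refine Filter.Tendsto.congr' ?_ tendsto_const_nhds
        filter_upwards [hzero] with j hj using hj.symm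
      simp only [id_eq] at hlim
      exact tendsto_nhds_unique hlim h0
    · filter_upwards [self_mem_nhdsWithin] with j hj
      exact Metric.mem_closedBall_self (by simpa using le_of_lt hj)
  -- conclude
  filter_upwards [ae_restrict_of_ae hft0, ae_restrict_mem (μ := volume) measurableSet_Icc]
    with x h1 h2
  rw [← indicator_of_mem h2 f]
  exact h1

end Helpers

/-- **The weak `B`-condition with `C₀ = 0`.**
Let `B := T* ∘ T` (characterized by `⟨Bx, y⟩ = ⟨Tx, Ty⟩` for all `x, y`). Then `B` is
self-adjoint, `⟨Bx, x⟩ > 0` for every `x ≠ 0`, and `⟨Tx, x⟩ ≤ 0` for every `x ∈ X`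
(since `Ã*B = Ã⁻¹ = T`, the latter says `⟨Ã*Bx, x⟩ ≤ 0`). -/
theorem weak_B_condition (d : ℝ) (hd : 0 < d) (n : ℕ)
    (T : Xsp d n →L[ℝ] Xsp d n) (hT : SpecT d n T)
    (B : Xsp d n →L[ℝ] Xsp d n)
    (hB : ∀ x y : Xsp d n, ⟪B x, y⟫ = ⟪T x, T y⟫) :
    (∀ x y : Xsp d n, ⟪B x, y⟫ = ⟪x, B y⟫) ∧
    (∀ x : Xsp d n, x ≠ 0 → 0 < ⟪B x, x⟫) ∧
    (∀ x : Xsp d n, ⟪T x, x⟫ ≤ 0) := by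
  classical
  refine ⟨?_, ?_, ?_⟩
  · -- self-adjointness
    intro x y
    rw [hB, ← real_inner_comm x (B y), hB y x]
    exact (real_inner_comm (T x) (T y)).symm
  · -- positivity
    intro x hx
    rw [hB]
    have hTx : T x ≠ 0 := by
      intro hTx
      apply hx
      obtain ⟨h1, h2⟩ := hT x
      rw [hTx] at h1 h2
      have hy0 : fstX x = 0 := by
        have h1' : (0 : En n) = -fstX x := h1
        have := h1'.symm
        rwa [neg_eq_zero] at this
      have hG : (fun ξ => ∫ s in ξ..0, ((sndX x : ℝ → En n)) s) =ᵐ[muD d] 0 := by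
        have h0 : ((sndX (0 : Xsp d n)) : ℝ → En n) =ᵐ[muD d] 0 := Lp.coeFn_zero _ _ _
        filter_upwards [h2, h0] with ξ ha hb
        rw [hy0] at ha
        rw [hb] at ha
        simp only [Pi.zero_apply, neg_zero, zero_sub] at ha ⊢
        exact (neg_eq_zero.1 ha.symm)
      have hfi : Integrable ((sndX x : ℝ → En n)) (muD d) :=
        (Lp.memLp (sndX x)).integrable one_le_two
      have hf0 := f_ae_zero hd _ hfi hG
      have hs0 : sndX x = 0 := Lp.eq_zero_iff_ae_eq_zero.2 hf0
      exact (WithLp.equiv 2 _).injective (Prod.ext hy0 hs0)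
    exact lt_of_le_of_ne real_inner_self_nonneg
      (Ne.symm (inner_self_ne_zero.2 hTx))
  · -- negativity of ⟪T x, x⟫
    intro x
    obtain ⟨h1, h2⟩ := hT x
    set y₀ := fstX x with hy₀
    set f : ℝ → En n := (sndX x : ℝ → En n) with hf
    have hfi : Integrable f (muD d) := (Lp.memLp (sndX x)).integrable one_le_two
    obtain ⟨hint2, hval⟩ := key_triangle f hfi
    set A := ∫ s, f s ∂(muD d) with hA
    have hsnd : ⟪sndX (T x), sndX x⟫ = -⟪y₀, A⟫ - ⟪A, A⟫ / 2 := by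
      rw [L2.inner_def]
      have hcongr : (∫ a, ⟪(sndX (T x) : ℝ → En n) a, f a⟫ ∂(muD d))
          = ∫ a, (⟪-y₀, f a⟫ - ⟪(∫ s in a..0, f s), f a⟫) ∂(muD d) := by
        refine integral_congr_ae ?_
        filter_upwards [h2] with ξ hξ
        rw [hξ, inner_sub_left]
      rw [hcongr, integral_sub (hfi.const_inner (-y₀)) hint2,
        integral_inner hfi (-y₀), hval, ← hA, inner_neg_left]
    have hfst : ⟪fstX (T x), fstX x⟫ = -⟪y₀, y₀⟫ := by
      rw [h1, inner_neg_left]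
    have hTfull : ⟪T x, x⟫ = ⟪fstX (T x), fstX x⟫ + ⟪sndX (T x), sndX x⟫ := rfl
    rw [hTfull, hfst, hsnd]
    nlinarith [real_inner_self_nonneg (x := y₀),
      real_inner_self_nonneg (x := y₀ + A),
      real_inner_add_add_self y₀ A]

end
end

section
/- The Hilbert-space adjoint of T is given explicitly by T*(y₀,y₁) = (−y₀ − ∫_{−d}^0 y₁(s) ds, ξ ↦ −∫_{−d}^ξ y₁(s) ds) for every (y₀,y₁) ∈ X, and the range of T* equals the set of all (x₀,x₁) ∈ X such that x₁ has an absolutely continuous representative g with a.e. derivative g′ ∈ L²([-d,0];ℝⁿ) and g(−d) = 0. (This set is the domain D(Ã*) of the adjoint of the delay operator, and coincides with the range of B^{1/2} where B = T*T.) -/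
open MeasureTheory Set
open scoped RealInnerProductSpace ENNReal

noncomputable section

namespace AdjHelp

variable {d : ℝ} {n : ℕ}

lemma muD_fin (d : ℝ) : IsFiniteMeasure (muD d) := by
  constructor
  rw [muD, Measure.restrict_apply_univ, Real.volume_Icc]
  exact ENNReal.ofReal_lt_top

lemma ae_mem_Icc (d : ℝ) : ∀ᵐ s ∂(muD d), s ∈ Icc (-d) 0 :=
  ae_restrict_mem measurableSet_Icc

lemma restrict_muD {s : Set ℝ} (hs : MeasurableSet s) (h : s ⊆ Icc (-d) 0) :
    (muD d).restrict s = volume.restrict s := by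
  rw [muD, Measure.restrict_restrict hs, Set.inter_eq_left.mpr h]

/-- Build an element of `Xsp` from its two components. -/
def mkX (d : ℝ) (n : ℕ) (a : En n) (b : Lp (En n) 2 (muD d)) : Xsp d n :=
  (WithLp.equiv 2 _).symm (a, b)

@[simp] lemma fstX_mkX (a : En n) (b : Lp (En n) 2 (muD d)) : fstX (mkX d n a b) = a := rfl
@[simp] lemma sndX_mkX (a : En n) (b : Lp (En n) 2 (muD d)) : sndX (mkX d n a b) = b := rfl

lemma inner_Xsp (x y : Xsp d n) :
    ⟪x, y⟫ = ⟪fstX x, fstX y⟫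
      + ∫ s, ⟪(sndX x : ℝ → En n) s, (sndX y : ℝ → En n) s⟫ ∂(muD d) := by
  rw [WithLp.prod_inner_apply, L2.inner_def]; rfl

lemma intervalIntegral_eq_muD (f : ℝ → En n) {a b : ℝ} (hab : a ≤ b)
    (h : Ioc a b ⊆ Icc (-d) 0) :
    ∫ s in a..b, f s = ∫ s in Ioc a b, f s ∂(muD d) := by
  rw [intervalIntegral.integral_of_le hab]
  show ∫ s, f s ∂(volume.restrict (Ioc a b)) = ∫ s, f s ∂((muD d).restrict (Ioc a b))
  rw [restrict_muD measurableSet_Ioc h]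

lemma intervalIntegral_congr_muD {f g : ℝ → En n} (hfg : f =ᵐ[muD d] g)
    {a b : ℝ} (hab : a ≤ b) (h : Ioc a b ⊆ Icc (-d) 0) :
    ∫ s in a..b, f s = ∫ s in a..b, g s := by
  have hfg' : f =ᵐ[volume.restrict (Icc (-d) 0)] g := hfg
  rw [intervalIntegral.integral_of_le hab, intervalIntegral.integral_of_le hab]
  exact integral_congr_ae (ae_restrict_of_ae_restrict_of_subset h hfg')

lemma integrable_Lp (w : Lp (En n) 2 (muD d)) : Integrable (w : ℝ → En n) (muD d) := by
  haveI := muD_fin d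
  exact (Lp.memLp w).integrable one_le_two

lemma integral_muD_eq_intervalIntegral (f : ℝ → En n) (hd : 0 < d) :
    ∫ s, f s ∂(muD d) = ∫ s in (-d)..0, f s := by
  rw [intervalIntegral.integral_of_le (by linarith)]
  show ∫ s, f s ∂(volume.restrict (Icc (-d) 0)) = _
  rw [← integral_Icc_eq_integral_Ioc]

lemma prim_eq (f : ℝ → En n) {ξ : ℝ} (hξ : ξ ∈ Icc (-d) 0) :
    ∫ s in (-d)..ξ, (Icc (-d) 0).indicator f s = ∫ s in (-d)..ξ, f s := by
  have hsub : Ioc (-d) ξ ⊆ Icc (-d) 0 := fun s hs => ⟨hs.1.le, hs.2.trans hξ.2⟩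
  rw [intervalIntegral.integral_of_le hξ.1, intervalIntegral.integral_of_le hξ.1,
      setIntegral_indicator measurableSet_Icc, Set.inter_eq_left.mpr hsub]

lemma prim_memLp (f : ℝ → En n) (hf : Integrable f (muD d)) :
    MemLp (fun ξ => ∫ s in (-d)..ξ, (Icc (-d) 0).indicator f s) 2 (muD d) := by
  haveI := muD_fin d
  have hfI : IntegrableOn f (Icc (-d) 0) volume := hf
  have hind : Integrable ((Icc (-d) 0).indicator f) volume :=
    hfI.integrable_indicator measurableSet_Icc
  have hcont : Continuous (fun ξ => ∫ s in (-d)..ξ, (Icc (-d) 0).indicator f s) :=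
    hind.continuous_primitive (-d)
  obtain ⟨C, hC⟩ := isCompact_Icc.exists_bound_of_continuousOn (s := Icc (-d) 0)
    hcont.continuousOn
  refine MemLp.of_bound hcont.aestronglyMeasurable C ?_
  filter_upwards [ae_mem_Icc d] with ξ hξ using hC ξ hξ

lemma integral_Iio_eq (f : ℝ → En n) {s : ℝ} (hs : s ∈ Icc (-d) 0) :
    ∫ ξ in Iio s, f ξ ∂(muD d) = ∫ ξ in (-d)..s, f ξ := by
  have hset : Iio s ∩ Icc (-d) 0 = Ico (-d) s := by
    ext ξ
    constructor
    · rintro ⟨h1, h2, _⟩; exact ⟨h2, h1⟩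
    · rintro ⟨h1, h2⟩; exact ⟨h2, h1, h2.le.trans hs.2⟩
  rw [intervalIntegral.integral_of_le hs.1]
  show ∫ ξ, f ξ ∂((muD d).restrict (Iio s)) = _
  rw [muD, Measure.restrict_restrict measurableSet_Iio, hset]
  rw [show ∫ ξ, f ξ ∂(volume.restrict (Ico (-d) s)) = ∫ ξ in Ico (-d) s, f ξ from rfl,
      integral_Ico_eq_integral_Ioo, integral_Ioc_eq_integral_Ioo]

lemma swap_core (f g : ℝ → En n) (hf : Integrable f (muD d)) (hg : Integrable g (muD d)) :
    ∫ ξ, ⟪f ξ, ∫ s in Ioc ξ 0, g s ∂(muD d)⟫ ∂(muD d)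
      = ∫ s, ⟪∫ ξ in Iio s, f ξ ∂(muD d), g s⟫ ∂(muD d) := by
  haveI := muD_fin d
  set μ := muD d with hμ
  set S : Set (ℝ × ℝ) := {q : ℝ × ℝ | q.1 < q.2} with hS
  have hSm : MeasurableSet S := measurableSet_lt measurable_fst measurable_snd
  set F : ℝ × ℝ → ℝ := S.indicator (fun q => ⟪f q.1, g q.2⟫) with hF
  have hFint : Integrable F (μ.prod μ) := by
    apply Integrable.mono' (hf.norm.mul_prod hg.norm)
    · exact (hf.aestronglyMeasurable.comp_fst.inner hg.aestronglyMeasurable.comp_snd).indicator hSm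
    · refine Filter.Eventually.of_forall fun q => ?_
      by_cases h : q ∈ S
      · rw [hF, Set.indicator_of_mem h]
        exact norm_inner_le_norm _ _
      · rw [hF, Set.indicator_of_notMem h]
        simpa using mul_nonneg (norm_nonneg (f q.1)) (norm_nonneg (g q.2))
  have lhs_eq : ∀ᵐ ξ ∂μ, ⟪f ξ, ∫ s in Ioc ξ 0, g s ∂μ⟫ = ∫ s, F (ξ, s) ∂μ := by
    filter_upwards [ae_mem_Icc d] with ξ hξ
    rw [← integral_indicator measurableSet_Ioc,
        ← integral_inner (hg.indicator measurableSet_Ioc) (f ξ)]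
    apply integral_congr_ae
    filter_upwards [ae_mem_Icc d] with s hs
    by_cases h : ξ < s
    · rw [Set.indicator_of_mem (show s ∈ Ioc ξ 0 from ⟨h, hs.2⟩),
        hF, Set.indicator_of_mem (show (ξ, s) ∈ S from h)]
    · rw [Set.indicator_of_notMem (fun hc => h hc.1),
        hF, Set.indicator_of_notMem (show (ξ, s) ∉ S from h), inner_zero_right]
  rw [integral_congr_ae lhs_eq]
  have swap := integral_integral_swap (f := fun ξ s => F (ξ, s)) (μ := μ) (ν := μ) hFint
  rw [swap]
  apply integral_congr_ae
  filter_upwards [ae_mem_Icc d] with s hs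
  have hpt : (fun ξ => F (ξ, s)) = (Iio s).indicator (fun ξ => ⟪f ξ, g s⟫) := by
    funext ξ
    by_cases h : ξ < s <;>
      simp [hF, hS, Set.indicator_apply, h]
  calc ∫ ξ, F (ξ, s) ∂μ = ∫ ξ in Iio s, ⟪f ξ, g s⟫ ∂μ := by
        rw [hpt, integral_indicator measurableSet_Iio]
    _ = ∫ ξ in Iio s, ⟪g s, f ξ⟫ ∂μ :=
        integral_congr_ae (Filter.Eventually.of_forall fun ξ => real_inner_comm _ _)
    _ = ⟪g s, ∫ ξ in Iio s, f ξ ∂μ⟫ := integral_inner hf.integrableOn (g s)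
    _ = ⟪∫ ξ in Iio s, f ξ ∂μ, g s⟫ := real_inner_comm _ _

lemma eq_of_inner (u : Lp (En n) 2 (muD d)) {h : ℝ → En n} (hh : MemLp h 2 (muD d))
    (heq : ∀ w : Lp (En n) 2 (muD d),
      ⟪u, w⟫ = ∫ s, ⟪h s, (w : ℝ → En n) s⟫ ∂(muD d)) :
    (u : ℝ → En n) =ᵐ[muD d] h := by
  have hu : u = hh.toLp h := by
    apply ext_inner_right ℝ
    intro w
    rw [heq w, L2.inner_def]
    apply integral_congr_ae
    filter_upwards [hh.coeFn_toLp] with s hs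
    rw [hs]
  rw [hu]
  exact hh.coeFn_toLp

end AdjHelp

/-- **Explicit formula for `T*` and its range.** -/
theorem adjoint_of_delay_inverse (d : ℝ) (hd : 0 < d) (n : ℕ)
    (T : Xsp d n →L[ℝ] Xsp d n) (hT : SpecT d n T)
    (Tstar : Xsp d n →L[ℝ] Xsp d n)
    (hTstar : ∀ x y : Xsp d n, ⟪Tstar x, y⟫ = ⟪x, T y⟫) :
    (∀ y : Xsp d n,
      fstX (Tstar y) = -fstX y - ∫ s in (-d)..0, (sndX y : ℝ → En n) s ∧
      (sndX (Tstar y) : ℝ → En n) =ᵐ[muD d]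
        fun ξ => -∫ s in (-d)..ξ, (sndX y : ℝ → En n) s) ∧
    Set.range Tstar =
      {x : Xsp d n | ∃ g g' : ℝ → En n, IsW12 d g g' ∧ g (-d) = 0 ∧
        (sndX x : ℝ → En n) =ᵐ[muD d] g} := by
  haveI := AdjHelp.muD_fin d
  have hd0 : (-d : ℝ) ≤ 0 := by linarith
  -- Part 1, first component
  have hfst : ∀ x : Xsp d n,
      fstX (Tstar x) = -fstX x - ∫ s in (-d)..0, (sndX x : ℝ → En n) s := by
    intro x
    have hfi : Integrable (fun s => (sndX x : ℝ → En n) s) (muD d) := AdjHelp.integrable_Lp _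
    apply ext_inner_right ℝ
    intro v
    have hy := hTstar x (AdjHelp.mkX d n v 0)
    obtain ⟨hT1, hT2⟩ := hT (AdjHelp.mkX d n v 0)
    rw [AdjHelp.inner_Xsp, AdjHelp.inner_Xsp] at hy
    simp only [AdjHelp.fstX_mkX, AdjHelp.sndX_mkX] at hy hT1 hT2
    have hz : ∫ s, ⟪(sndX (Tstar x) : ℝ → En n) s,
        ((0 : Lp (En n) 2 (muD d)) : ℝ → En n) s⟫ ∂(muD d) = 0 := by
      apply integral_eq_zero_of_ae
      filter_upwards [Lp.coeFn_zero (En n) 2 (muD d)] with s hs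
      simp only [hs, Pi.zero_apply, inner_zero_right]
    have hI : ∫ s, ⟪(sndX x : ℝ → En n) s,
        (sndX (T (AdjHelp.mkX d n v 0)) : ℝ → En n) s⟫ ∂(muD d)
        = -⟪∫ s, (sndX x : ℝ → En n) s ∂(muD d), v⟫ := by
      calc ∫ s, ⟪(sndX x : ℝ → En n) s,
            (sndX (T (AdjHelp.mkX d n v 0)) : ℝ → En n) s⟫ ∂(muD d)
          = ∫ s, -⟪v, (sndX x : ℝ → En n) s⟫ ∂(muD d) := by
            apply integral_congr_ae
            filter_upwards [hT2, AdjHelp.ae_mem_Icc d] with s hs hmem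
            simp only [hs]
            have hzero : ∫ t in s..0, ((0 : Lp (En n) 2 (muD d)) : ℝ → En n) t
                = (0 : En n) := by
              rw [AdjHelp.intervalIntegral_congr_muD (g := fun _ => (0 : En n))
                (Lp.coeFn_zero (En n) 2 (muD d)) hmem.2
                (fun t ht => ⟨hmem.1.trans ht.1.le, ht.2⟩)]
              simp
            rw [hzero, sub_zero, inner_neg_right, real_inner_comm]
        _ = -⟪v, ∫ s, (sndX x : ℝ → En n) s ∂(muD d)⟫ := by
            rw [integral_neg, integral_inner hfi v]
        _ = -⟪∫ s, (sndX x : ℝ → En n) s ∂(muD d), v⟫ := by rw [real_inner_comm]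
    rw [hz, hT1, hI] at hy
    rw [← AdjHelp.integral_muD_eq_intervalIntegral _ hd]
    rw [inner_sub_left, inner_neg_left]
    simp only [inner_neg_right, add_zero] at hy
    linarith
  -- Part 1, second component
  have hsnd : ∀ x : Xsp d n, (sndX (Tstar x) : ℝ → En n) =ᵐ[muD d]
      fun ξ => -∫ s in (-d)..ξ, (sndX x : ℝ → En n) s := by
    intro x
    have hfi : Integrable (fun s => (sndX x : ℝ → En n) s) (muD d) := AdjHelp.integrable_Lp _
    have hHmem : MemLp
        (fun ξ => -∫ s in (-d)..ξ, (Icc (-d) 0).indicator (sndX x : ℝ → En n) s)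
        2 (muD d) := (AdjHelp.prim_memLp _ hfi).neg
    have key : ∀ w : Lp (En n) 2 (muD d),
        ⟪sndX (Tstar x), w⟫ = ∫ s,
          ⟪-∫ t in (-d)..s, (Icc (-d) 0).indicator (sndX x : ℝ → En n) t,
            (w : ℝ → En n) s⟫ ∂(muD d) := by
      intro w
      have hwi : Integrable (fun s => (w : ℝ → En n) s) (muD d) := AdjHelp.integrable_Lp w
      have hy := hTstar x (AdjHelp.mkX d n 0 w)
      obtain ⟨hT1, hT2⟩ := hT (AdjHelp.mkX d n 0 w)
      rw [AdjHelp.inner_Xsp, AdjHelp.inner_Xsp] at hy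
      simp only [AdjHelp.fstX_mkX, AdjHelp.sndX_mkX] at hy hT1 hT2
      rw [hT1] at hy
      simp only [neg_zero, inner_zero_right, zero_add] at hy
      have hmid : ∫ s, ⟪(sndX x : ℝ → En n) s,
            (sndX (T (AdjHelp.mkX d n 0 w)) : ℝ → En n) s⟫ ∂(muD d)
          = ∫ ξ, ⟪(sndX x : ℝ → En n) ξ,
              -∫ s in Ioc ξ 0, (w : ℝ → En n) s ∂(muD d)⟫ ∂(muD d) := by
        apply integral_congr_ae
        filter_upwards [hT2, AdjHelp.ae_mem_Icc d] with ξ hξ hmem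
        simp only [hξ]
        congr 1
        rw [AdjHelp.intervalIntegral_eq_muD _ hmem.2
          (fun t ht => ⟨hmem.1.trans ht.1.le, ht.2⟩), neg_zero, zero_sub]
      have hswap : ∫ ξ, ⟪(sndX x : ℝ → En n) ξ,
            -∫ s in Ioc ξ 0, (w : ℝ → En n) s ∂(muD d)⟫ ∂(muD d)
          = ∫ s, ⟪-∫ t in (-d)..s, (Icc (-d) 0).indicator (sndX x : ℝ → En n) t,
              (w : ℝ → En n) s⟫ ∂(muD d) := by
        have h1 : ∫ ξ, ⟪(sndX x : ℝ → En n) ξ,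
              -∫ s in Ioc ξ 0, (w : ℝ → En n) s ∂(muD d)⟫ ∂(muD d)
            = -∫ ξ, ⟪(sndX x : ℝ → En n) ξ,
                ∫ s in Ioc ξ 0, (w : ℝ → En n) s ∂(muD d)⟫ ∂(muD d) := by
          rw [← integral_neg]
          exact integral_congr_ae (Filter.Eventually.of_forall fun ξ => inner_neg_right _ _)
        rw [h1, AdjHelp.swap_core _ _ hfi hwi, ← integral_neg]
        apply integral_congr_ae
        filter_upwards [AdjHelp.ae_mem_Icc d] with s hs
        have : ∫ ξ in Iio s, (sndX x : ℝ → En n) ξ ∂(muD d)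
            = ∫ ξ in (-d)..s, (sndX x : ℝ → En n) ξ := AdjHelp.integral_Iio_eq _ hs
        rw [this, inner_neg_left, AdjHelp.prim_eq _ hs]
      rw [hmid, hswap] at hy
      rw [L2.inner_def]
      exact hy
    have h1 := AdjHelp.eq_of_inner (sndX (Tstar x)) hHmem key
    refine h1.trans ?_
    filter_upwards [AdjHelp.ae_mem_Icc d] with ξ hξ
    have := AdjHelp.prim_eq (fun s => (sndX x : ℝ → En n) s) hξ
    simp only [neg_inj]
    exact this
  refine ⟨fun y => ⟨hfst y, hsnd y⟩, ?_⟩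
  ext x
  simp only [Set.mem_range, Set.mem_setOf_eq]
  constructor
  · rintro ⟨y, rfl⟩
    refine ⟨fun ξ => -∫ s in (-d)..ξ, (Icc (-d) 0).indicator (sndX y : ℝ → En n) s,
        fun s => -((Icc (-d) 0).indicator (sndX y : ℝ → En n) s), ⟨?_, ?_⟩, ?_, ?_⟩
    · have hind : (fun s => (sndX y : ℝ → En n) s) =ᵐ[muD d]
          (Icc (-d) 0).indicator (sndX y : ℝ → En n) := by
        filter_upwards [AdjHelp.ae_mem_Icc d] with s hs
        exact (Set.indicator_of_mem hs _).symm
      exact (MemLp.ae_eq hind (Lp.memLp (sndX y))).neg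
    · intro ξ hξ
      simp only [intervalIntegral.integral_same, intervalIntegral.integral_neg, neg_zero,
        zero_add]
    · simp only [intervalIntegral.integral_same, neg_zero]
    · refine (hsnd y).trans ?_
      filter_upwards [AdjHelp.ae_mem_Icc d] with ξ hξ
      have := AdjHelp.prim_eq (fun s => (sndX y : ℝ → En n) s) hξ
      simp only [neg_inj]
      exact this.symm
  · rintro ⟨g, g', ⟨hg'mem, hgrep⟩, hgd, hxg⟩
    have h00 : (0 : ℝ) ∈ Icc (-d) 0 := ⟨hd0, le_refl 0⟩
    have hymem : MemLp (fun s => -g' s) 2 (muD d) := hg'mem.neg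
    set w : Lp (En n) 2 (muD d) := hymem.toLp _ with hwdef
    have hwcoe : (w : ℝ → En n) =ᵐ[muD d] fun s => -g' s := hymem.coeFn_toLp
    refine ⟨AdjHelp.mkX d n (g 0 - fstX x) w, ?_⟩
    have h1 := hfst (AdjHelp.mkX d n (g 0 - fstX x) w)
    have h2 := hsnd (AdjHelp.mkX d n (g 0 - fstX x) w)
    simp only [AdjHelp.fstX_mkX, AdjHelp.sndX_mkX] at h1 h2
    have hw0 : ∫ s in (-d)..0, (w : ℝ → En n) s = -(g 0) := by
      rw [AdjHelp.intervalIntegral_congr_muD hwcoe hd0 Ioc_subset_Icc_self,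
        intervalIntegral.integral_neg]
      have hg0 := hgrep 0 h00
      rw [hgd, zero_add] at hg0
      rw [hg0]
    have hfsteq : fstX (Tstar (AdjHelp.mkX d n (g 0 - fstX x) w)) = fstX x := by
      rw [h1, hw0]
      abel
    have hsndeq : sndX (Tstar (AdjHelp.mkX d n (g 0 - fstX x) w)) = sndX x := by
      apply Lp.ext (μ := muD d)
      refine h2.trans (Filter.EventuallyEq.trans ?_ hxg.symm)
      filter_upwards [AdjHelp.ae_mem_Icc d] with ξ hξ
      show -∫ s in (-d)..ξ, (w : ℝ → En n) s = g ξ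
      rw [AdjHelp.intervalIntegral_congr_muD hwcoe hξ.1
        (fun t ht => ⟨ht.1.le, ht.2.trans hξ.2⟩),
        intervalIntegral.integral_neg, neg_neg]
      rw [hgrep ξ hξ, hgd, zero_add]
    apply (WithLp.equiv 2 _).injective
    exact Prod.ext hfsteq hsndeq

end
end

section
/- Let a : [−d,0] → M^{h×n} (real h×n matrices) be such that every entry of a has an absolutely continuous representative with a.e. derivative in L²([−d,0];ℝ) and a(−d) = 0. Then there exists a constant C > 0 such that for all (x₀,x₁) ∈ X: |∫_{−d}^0 a(ξ) x₁(ξ) dξ| ≤ C |T(x₀,x₁)|_X = C |x|_{−1}. -/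
open MeasureTheory Set
open scoped RealInnerProductSpace ENNReal

noncomputable section

/-- The delayed-integral term `∫_{-d}^0 a(ξ) x₁(ξ) dξ ∈ ℝʰ`. -/
def delayInt {d : ℝ} {n : ℕ} (h : ℕ) (a : ℝ → Matrix (Fin h) (Fin n) ℝ)
    (x : Xsp d n) : En h :=
  ∫ ξ in (-d)..0, (WithLp.toLp 2 ((a ξ).mulVec ((sndX x : ℝ → En n) ξ)) : En h)

section Aux

lemma En_abs_coord_le_norm {n : ℕ} (v : EuclideanSpace ℝ (Fin n)) (j : Fin n) :
    |v j| ≤ ‖v‖ := by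
  rw [EuclideanSpace.norm_eq, ← Real.sqrt_sq_eq_abs]
  apply Real.sqrt_le_sqrt
  have := Finset.single_le_sum (f := fun i => ‖v i‖ ^ 2) (fun i _ => sq_nonneg _)
    (Finset.mem_univ j)
  simpa [Real.norm_eq_abs, sq_abs] using this

lemma En_norm_le_sum {n : ℕ} (v : EuclideanSpace ℝ (Fin n)) :
    ‖v‖ ≤ ∑ i, |v i| := by
  rw [EuclideanSpace.norm_eq]
  have h1 : ∑ i, ‖v i‖ ^ 2 ≤ (∑ i, |v i|) ^ 2 := by
    have := Finset.sum_sq_le_sq_sum_of_nonneg (s := Finset.univ)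
      (f := fun i => |v i|) (fun i _ => abs_nonneg _)
    simpa [Real.norm_eq_abs] using this
  calc Real.sqrt (∑ i, ‖v i‖ ^ 2) ≤ Real.sqrt ((∑ i, |v i|) ^ 2) := Real.sqrt_le_sqrt h1
  _ = ∑ i, |v i| := Real.sqrt_sq (Finset.sum_nonneg fun i _ => abs_nonneg _)

lemma abs_integral_mul_le {α : Type*} [MeasurableSpace α] {μ : Measure α} {g u : α → ℝ}
    (hg : MemLp g 2 μ) (hu : MemLp u 2 μ) :
    |∫ s, g s * u s ∂μ| ≤ (eLpNorm g 2 μ).toReal * (eLpNorm u 2 μ).toReal := by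
  have h1 : ∫ s, g s * u s ∂μ = (inner ℝ (hg.toLp g) (hu.toLp u) : ℝ) := by
    rw [L2.inner_def]
    refine (integral_congr_ae ?_).symm
    filter_upwards [hg.coeFn_toLp, hu.coeFn_toLp] with s h1 h2
    rw [h1, h2]
    simp [RCLike.inner_apply, mul_comm]
  rw [h1]
  calc |(inner ℝ (hg.toLp g) (hu.toLp u) : ℝ)| ≤ ‖hg.toLp g‖ * ‖hu.toLp u‖ :=
        abs_real_inner_le_norm _ _
  _ = _ := by rw [Lp.norm_toLp, Lp.norm_toLp]

lemma swap_int {μ : Measure ℝ} [IsFiniteMeasure μ] {f g : ℝ → ℝ}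
    (hf : Integrable f μ) (hg : Integrable g μ) :
    ∫ ξ, (∫ s in Iic ξ, g s ∂μ) * f ξ ∂μ = ∫ s, g s * (∫ ξ in Ici s, f ξ ∂μ) ∂μ := by
  have hmeas : MeasurableSet {p : ℝ × ℝ | p.1 ≤ p.2} :=
    measurableSet_le measurable_fst measurable_snd
  set H : ℝ → ℝ → ℝ :=
    fun s ξ => ({p : ℝ × ℝ | p.1 ≤ p.2}).indicator (fun p => g p.1 * f p.2) (s, ξ) with hH
  have hint : Integrable (Function.uncurry H) (μ.prod μ) := by
    have he : Function.uncurry H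
        = ({p : ℝ × ℝ | p.1 ≤ p.2}).indicator (fun p => g p.1 * f p.2) := rfl
    rw [he]
    exact (hg.mul_prod hf).indicator hmeas
  have hswap := integral_integral_swap hint
  have h1 : ∀ ξ, ∫ s, H s ξ ∂μ = (∫ s in Iic ξ, g s ∂μ) * f ξ := by
    intro ξ
    have he : (fun s => H s ξ) = (Iic ξ).indicator (fun s => g s * f ξ) := by
      funext s; by_cases hs : s ≤ ξ <;> simp [hH, hs, Set.indicator]
    rw [he, integral_indicator measurableSet_Iic, integral_mul_const]
  have h2 : ∀ s, ∫ ξ, H s ξ ∂μ = g s * (∫ ξ in Ici s, f ξ ∂μ) := by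
    intro s
    have he : (fun ξ => H s ξ) = (Ici s).indicator (fun ξ => g s * f ξ) := by
      funext ξ; by_cases hs : s ≤ ξ <;> simp [hH, hs, Set.indicator]
    rw [he, integral_indicator measurableSet_Ici, integral_const_mul]
  calc ∫ ξ, (∫ s in Iic ξ, g s ∂μ) * f ξ ∂μ = ∫ ξ, ∫ s, H s ξ ∂μ ∂μ := by simp_rw [h1]
  _ = ∫ s, ∫ ξ, H s ξ ∂μ ∂μ := hswap.symm
  _ = ∫ s, g s * (∫ ξ in Ici s, f ξ ∂μ) ∂μ := by simp_rw [h2]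

end Aux

set_option maxHeartbeats 1000000

/-- **The delayed integral is `|·|_{-1}`-bounded.**
If every entry of the kernel `a : [-d,0] → M^{h×n}` is absolutely continuous with a.e.
derivative in `L²` and `a(-d) = 0`, then there is `C > 0` with
`|∫_{-d}^0 a(ξ) x₁(ξ) dξ| ≤ C |Tx|_X = C |x|_{-1}` for all `x ∈ X`. -/
theorem delayInt_le_weak_norm (d : ℝ) (hd : 0 < d) (n h : ℕ)
    (a a' : ℝ → Matrix (Fin h) (Fin n) ℝ)
    (ha'L2 : ∀ i j, MemLp (fun ξ => a' ξ i j) 2 (muD d))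
    (haAC : ∀ i j, ∀ ξ ∈ Icc (-d) 0, a ξ i j = a (-d) i j + ∫ s in (-d)..ξ, a' s i j)
    (ha0 : a (-d) = 0)
    (T : Xsp d n →L[ℝ] Xsp d n) (hT : SpecT d n T) :
    ∃ C > 0, ∀ x : Xsp d n, ‖delayInt h a x‖ ≤ C * ‖T x‖ := by
  classical
  have hd0 : -d ≤ (0:ℝ) := by linarith
  set μ := muD d with hμdef
  have hμ : μ = volume.restrict (Icc (-d) 0) := hμdef
  have hμuniv : μ univ = ENNReal.ofReal d := by
    rw [hμ, Measure.restrict_apply_univ, Real.volume_Icc]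
    norm_num
  haveI : IsFiniteMeasure μ := by
    refine ⟨?_⟩
    rw [hμuniv]; exact ENNReal.ofReal_lt_top
  have hμne0 : μ ≠ 0 := by
    intro h0
    rw [h0] at hμuniv
    simp only [Measure.coe_zero, Pi.zero_apply] at hμuniv
    have := ENNReal.ofReal_pos.mpr hd
    rw [← hμuniv] at this
    exact lt_irrefl _ this
  set K : ℝ := ∑ i : Fin h, ∑ j : Fin n, (eLpNorm (fun s => a' s i j) 2 μ).toReal with hK
  have hK0 : 0 ≤ K :=
    Finset.sum_nonneg fun i _ => Finset.sum_nonneg fun j _ => ENNReal.toReal_nonneg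
  have hCpos : 0 < K * (Real.sqrt d + 1) + 1 := by
    nlinarith [Real.sqrt_nonneg d, hK0]
  refine ⟨K * (Real.sqrt d + 1) + 1, hCpos, fun x => ?_⟩
  obtain ⟨hT1, hT2'⟩ := hT x
  set x₁ : ℝ → En n := (sndX x : ℝ → En n) with hx₁
  set w : ℝ → En n := (sndX (T x) : ℝ → En n) with hw
  set y₀ : En n := fstX (T x) with hy₀
  have hT2 : w =ᵐ[μ] fun ξ => -fstX x - ∫ s in ξ..0, x₁ s := hT2'
  -- membership facts
  have hx₁m : MemLp x₁ 2 μ := Lp.memLp _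
  have hwm : MemLp w 2 μ := Lp.memLp _
  have hx₁int : Integrable x₁ μ := hx₁m.integrable one_le_two
  have hfm : ∀ j, MemLp (fun ξ => x₁ ξ j) 2 μ := by
    intro j
    have := (EuclideanSpace.proj j : En n →L[ℝ] ℝ).comp_memLp' hx₁m
    exact this.ae_eq (Filter.Eventually.of_forall fun s => rfl)
  have hwjm : ∀ j, MemLp (fun s => w s j) 2 μ := by
    intro j
    have := (EuclideanSpace.proj j : En n →L[ℝ] ℝ).comp_memLp' hwm
    exact this.ae_eq (Filter.Eventually.of_forall fun s => rfl)
  have hfint : ∀ j, Integrable (fun ξ => x₁ ξ j) μ := fun j => (hfm j).integrable one_le_two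
  have hgint : ∀ i j, Integrable (fun s => a' s i j) μ := fun i j =>
    (ha'L2 i j).integrable one_le_two
  -- the primitive of a'
  set P : Fin h → Fin n → ℝ → ℝ := fun i j ξ => ∫ s in Iic ξ, a' s i j ∂μ with hP
  have hPa : ∀ i j, ∀ ξ ∈ Icc (-d) 0, a ξ i j = P i j ξ := by
    intro i j ξ hξ
    have h1 : μ.restrict (Iic ξ) = volume.restrict (Icc (-d) ξ) := by
      rw [hμ, Measure.restrict_restrict measurableSet_Iic]
      congr 1
      ext z
      simp only [mem_inter_iff, mem_Iic, mem_Icc]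
      constructor
      · rintro ⟨h1, h2, h3⟩; exact ⟨h2, h1⟩
      · rintro ⟨h1, h2⟩; exact ⟨h2, h1, le_trans h2 hξ.2⟩
    rw [haAC i j ξ hξ, ha0]
    simp only [Matrix.zero_apply, zero_add]
    rw [intervalIntegral.integral_of_le hξ.1]
    show ∫ s in Ioc (-d) ξ, a' s i j = P i j ξ
    rw [hP]
    simp only []
    rw [h1, ← integral_Icc_eq_integral_Ioc]
  -- bound for the primitive
  set B : ℝ := ∑ i : Fin h, ∑ j : Fin n, ∫ s, |a' s i j| ∂μ with hB
  have hPB : ∀ i j ξ, |P i j ξ| ≤ B := by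
    intro i j ξ
    have h1 : |P i j ξ| ≤ ∫ s in Iic ξ, |a' s i j| ∂μ := by
      simpa using norm_integral_le_integral_norm (μ := μ.restrict (Iic ξ))
        (f := fun s => a' s i j)
    have h2 : ∫ s in Iic ξ, |a' s i j| ∂μ ≤ ∫ s, |a' s i j| ∂μ :=
      integral_mono_measure Measure.restrict_le_self
        (Filter.Eventually.of_forall fun s => abs_nonneg _) (hgint i j).abs
    have hnn : ∀ (i' : Fin h) (j' : Fin n), 0 ≤ ∫ s, |a' s i' j'| ∂μ := fun i' j' =>
      integral_nonneg fun s => abs_nonneg _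
    have h3 : ∫ s, |a' s i j| ∂μ ≤ B := by
      rw [hB]
      calc ∫ s, |a' s i j| ∂μ ≤ ∑ j', ∫ s, |a' s i j'| ∂μ :=
            Finset.single_le_sum (fun j' _ => hnn i j') (Finset.mem_univ j)
      _ ≤ ∑ i', ∑ j', ∫ s, |a' s i' j'| ∂μ :=
            Finset.single_le_sum (f := fun i' => ∑ j', ∫ s, |a' s i' j'| ∂μ)
              (fun i' _ => Finset.sum_nonneg fun j' _ => hnn i' j') (Finset.mem_univ i)
    linarith
  -- a.e. strong measurability of the primitive
  haveI : NullSingletonClass μ := hμ ▸ (inferInstance : NullSingletonClass (volume.restrict (Icc (-d) 0)))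
  have hPc : ∀ i j, AEStronglyMeasurable (P i j) μ := by
    intro i j
    have hcont : Continuous fun ξ => ∫ s in (-d)..ξ, a' s i j ∂μ := by
      apply intervalIntegral.continuous_primitive
      intro u v
      exact (hgint i j).intervalIntegrable
    refine hcont.aestronglyMeasurable.congr ?_
    have haeIcc : ∀ᵐ ξ ∂μ, ξ ∈ Icc (-d) 0 := by
      rw [hμ]; exact ae_restrict_mem measurableSet_Icc
    filter_upwards [haeIcc] with ξ hξ
    -- ∫ s in (-d)..ξ, a' s i j ∂μ = P i j ξ
    rw [intervalIntegral.integral_of_le hξ.1]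
    have h1 : μ.restrict (Iic ξ) = volume.restrict (Icc (-d) ξ) := by
      rw [hμ, Measure.restrict_restrict measurableSet_Iic]
      congr 1
      ext z
      simp only [mem_inter_iff, mem_Iic, mem_Icc]
      constructor
      · rintro ⟨h1, h2, h3⟩; exact ⟨h2, h1⟩
      · rintro ⟨h1, h2⟩; exact ⟨h2, h1, le_trans h2 hξ.2⟩
    have h2 : μ.restrict (Ioc (-d) ξ) = volume.restrict (Ioc (-d) ξ) := by
      rw [hμ, Measure.restrict_restrict measurableSet_Ioc]
      congr 1
      rw [inter_eq_self_of_subset_left]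
      intro z hz
      exact ⟨le_of_lt hz.1, le_trans hz.2 hξ.2⟩
    show ∫ s, a' s i j ∂(μ.restrict (Ioc (-d) ξ)) = P i j ξ
    rw [h2, hP]
    simp only []
    rw [h1, ← integral_Icc_eq_integral_Ioc]
  -- the modified integrand
  set G : ℝ → En h := fun ξ => (WithLp.toLp 2 ((Matrix.of fun i j => P i j ξ).mulVec (x₁ ξ)) : En h) with hG
  have hGcoord : ∀ ξ i, G ξ i = ∑ j, P i j ξ * x₁ ξ j := by
    intro ξ i
    rw [hG]
    simp [Matrix.mulVec, dotProduct]
  have hEqOn : EqOn (fun ξ => (WithLp.toLp 2 ((a ξ).mulVec (x₁ ξ)) : En h)) G (uIcc (-d) 0) := by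
    intro ξ hξ
    rw [uIcc_of_le hd0] at hξ
    show (WithLp.toLp 2 ((a ξ).mulVec (x₁ ξ)) : En h) = G ξ
    have he : a ξ = Matrix.of fun i j => P i j ξ := by
      ext i j; exact hPa i j ξ hξ
    rw [hG, he]
  have hd1 : delayInt h a x = ∫ ξ in (-d)..0, G ξ :=
    intervalIntegral.integral_congr (μ := volume) hEqOn
  have hd2 : delayInt h a x = ∫ ξ, G ξ ∂μ := by
    rw [hd1, intervalIntegral.integral_of_le hd0]
    rw [hμ]
    rw [← integral_Icc_eq_integral_Ioc]
  by_cases hGi : Integrable G μ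
  swap
  · rw [hd2, integral_undef hGi, norm_zero]
    positivity
  -- the key coordinatewise identity
  have key : ∀ i, (delayInt h a x) i = ∑ j, ∫ s, a' s i j * (y₀ j - w s j) ∂μ := by
    intro i
    have e1 : (delayInt h a x) i = ∫ ξ, G ξ i ∂μ := by
      rw [hd2]
      have := (EuclideanSpace.proj i : En h →L[ℝ] ℝ).integral_comp_comm hGi
      exact this.symm
    rw [e1]
    have e2 : ∫ ξ, G ξ i ∂μ = ∑ j, ∫ ξ, P i j ξ * x₁ ξ j ∂μ := by
      rw [← integral_finset_sum]
      · exact integral_congr_ae (Filter.Eventually.of_forall fun ξ => hGcoord ξ i)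
      · intro j _
        exact (hfint j).bdd_mul (hPc i j) (Filter.Eventually.of_forall fun ξ => by simpa using hPB i j ξ)
    rw [e2]
    refine Finset.sum_congr rfl fun j _ => ?_
    have hsw := swap_int (f := fun ξ => x₁ ξ j) (g := fun s => a' s i j)
      (hfint j) (hgint i j)
    have e3 : ∫ ξ, P i j ξ * x₁ ξ j ∂μ
        = ∫ s, a' s i j * (∫ ξ in Ici s, x₁ ξ j ∂μ) ∂μ := by
      rw [hP]; exact hsw
    rw [e3]
    apply integral_congr_ae
    have haeIcc : ∀ᵐ s ∂μ, s ∈ Icc (-d) 0 := by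
      rw [hμ]; exact ae_restrict_mem measurableSet_Icc
    filter_upwards [haeIcc, hT2] with s hs hws
    congr 1
    -- ∫ ξ in Ici s, x₁ ξ j ∂μ = y₀ j - w s j
    have h1 : μ.restrict (Ici s) = volume.restrict (Icc s 0) := by
      rw [hμ, Measure.restrict_restrict measurableSet_Ici]
      congr 1
      ext z
      simp only [mem_inter_iff, mem_Ici, mem_Icc]
      constructor
      · rintro ⟨h1, h2, h3⟩; exact ⟨h1, h3⟩
      · rintro ⟨h1, h2⟩; exact ⟨h1, le_trans hs.1 h1, h2⟩
    have hii : IntervalIntegrable x₁ volume s 0 := by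
      rw [intervalIntegrable_iff_integrableOn_Ioc_of_le hs.2]
      refine hx₁int.mono_measure ?_
      rw [hμ]
      have hsub2 : Ioc s 0 ⊆ Icc (-d) 0 := fun z hz => ⟨le_trans hs.1 (le_of_lt hz.1), hz.2⟩
      exact Measure.restrict_mono hsub2 le_rfl
    have h2 : ∫ ξ in Ici s, x₁ ξ j ∂μ = (∫ ξ in s..0, x₁ ξ) j := by
      have h3 : ∫ ξ in Ici s, x₁ ξ j ∂μ = ∫ ξ in s..0, x₁ ξ j := by
        rw [intervalIntegral.integral_of_le hs.2]
        show ∫ ξ, x₁ ξ j ∂(μ.restrict (Ici s)) = ∫ ξ, x₁ ξ j ∂(volume.restrict (Ioc s 0))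
        rw [h1, ← integral_Icc_eq_integral_Ioc]
      rw [h3]
      have := (EuclideanSpace.proj j : En n →L[ℝ] ℝ).intervalIntegral_comp_comm hii
        (a := s) (b := 0)
      exact this
    rw [h2, hws, hT1]
    simp [PiLp.sub_apply, PiLp.neg_apply]
  -- bound each term
  have hterm : ∀ i j, |∫ s, a' s i j * (y₀ j - w s j) ∂μ|
      ≤ (eLpNorm (fun s => a' s i j) 2 μ).toReal * ((Real.sqrt d + 1) * ‖T x‖) := by
    intro i j
    have hum : MemLp (fun s => y₀ j - w s j) 2 μ := (memLp_const (y₀ j)).sub (hwjm j)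
    refine (abs_integral_mul_le (ha'L2 i j) hum).trans ?_
    refine mul_le_mul_of_nonneg_left ?_ ENNReal.toReal_nonneg
    -- (eLpNorm u 2 μ).toReal ≤ (√d + 1) * ‖T x‖
    have hconst : eLpNorm (fun _ : ℝ => y₀ j) 2 μ
        = ‖y₀ j‖₊ * (ENNReal.ofReal d) ^ ((1:ℝ)/2) := by
      rw [eLpNorm_const _ two_ne_zero hμne0, hμuniv]
      norm_num
      rfl
    have hconst_ne : eLpNorm (fun _ : ℝ => y₀ j) 2 μ ≠ ⊤ := by
      rw [hconst]
      exact ENNReal.mul_ne_top ENNReal.coe_ne_top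
        (ENNReal.rpow_ne_top_of_nonneg (by norm_num) ENNReal.ofReal_ne_top)
    have hwj_ne : eLpNorm (fun s => w s j) 2 μ ≠ ⊤ := (hwjm j).eLpNorm_ne_top
    have hsub : eLpNorm (fun s => y₀ j - w s j) 2 μ
        ≤ eLpNorm (fun _ : ℝ => y₀ j) 2 μ + eLpNorm (fun s => w s j) 2 μ :=
      eLpNorm_sub_le aestronglyMeasurable_const (hwjm j).aestronglyMeasurable one_le_two
    have hy0norm : ‖y₀‖ ≤ ‖T x‖ := by
      have hsq := WithLp.prod_norm_sq_eq_of_L2 (T x)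
      have h1 : ‖y₀‖ = ‖(T x).fst‖ := rfl
      nlinarith [norm_nonneg (T x), norm_nonneg y₀, norm_nonneg (T x).snd]
    have hsnd : ‖sndX (T x)‖ ≤ ‖T x‖ := by
      have hsq := WithLp.prod_norm_sq_eq_of_L2 (T x)
      have h1 : ‖sndX (T x)‖ = ‖(T x).snd‖ := rfl
      nlinarith [norm_nonneg (T x), norm_nonneg (sndX (T x)), norm_nonneg (T x).fst]
    have hconst_toReal : (eLpNorm (fun _ : ℝ => y₀ j) 2 μ).toReal ≤ Real.sqrt d * ‖T x‖ := by
      rw [hconst, ENNReal.toReal_mul]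
      have h1 : ((‖y₀ j‖₊ : ℝ≥0∞)).toReal = |y₀ j| := by
        simp [Real.norm_eq_abs]
      have h2 : ((ENNReal.ofReal d ^ ((1:ℝ)/2)).toReal) = Real.sqrt d := by
        rw [← ENNReal.toReal_rpow, ENNReal.toReal_ofReal hd.le, ← Real.sqrt_eq_rpow]
      rw [h1, h2]
      have h3 : |y₀ j| ≤ ‖T x‖ := le_trans (En_abs_coord_le_norm y₀ j) hy0norm
      have := Real.sqrt_nonneg d
      nlinarith [abs_nonneg (y₀ j)]
    have hwj_toReal : (eLpNorm (fun s => w s j) 2 μ).toReal ≤ ‖T x‖ := by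
      have h1 : eLpNorm (fun s => w s j) 2 μ ≤ eLpNorm w 2 μ := by
        apply eLpNorm_mono
        intro s
        simpa [Real.norm_eq_abs] using En_abs_coord_le_norm (w s) j
      have h2 : (eLpNorm (fun s => w s j) 2 μ).toReal ≤ (eLpNorm w 2 μ).toReal :=
        ENNReal.toReal_mono (Lp.eLpNorm_ne_top _) h1
      have h3 : (eLpNorm w 2 μ).toReal = ‖sndX (T x)‖ := (Lp.norm_def _).symm
      rw [h3] at h2
      exact le_trans h2 hsnd
    calc (eLpNorm (fun s => y₀ j - w s j) 2 μ).toReal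
        ≤ (eLpNorm (fun _ : ℝ => y₀ j) 2 μ + eLpNorm (fun s => w s j) 2 μ).toReal :=
          ENNReal.toReal_mono (by
            rw [ENNReal.add_ne_top]; exact ⟨hconst_ne, hwj_ne⟩) hsub
    _ = (eLpNorm (fun _ : ℝ => y₀ j) 2 μ).toReal + (eLpNorm (fun s => w s j) 2 μ).toReal :=
          ENNReal.toReal_add hconst_ne hwj_ne
    _ ≤ Real.sqrt d * ‖T x‖ + ‖T x‖ := add_le_add hconst_toReal hwj_toReal
    _ = (Real.sqrt d + 1) * ‖T x‖ := by ring
  -- assemble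
  calc ‖delayInt h a x‖ ≤ ∑ i, |(delayInt h a x) i| := En_norm_le_sum _
  _ ≤ ∑ i : Fin h, ∑ j : Fin n,
        (eLpNorm (fun s => a' s i j) 2 μ).toReal * ((Real.sqrt d + 1) * ‖T x‖) := by
      refine Finset.sum_le_sum fun i _ => ?_
      rw [key i]
      refine (Finset.abs_sum_le_sum_abs _ _).trans ?_
      exact Finset.sum_le_sum fun j _ => hterm i j
  _ = K * ((Real.sqrt d + 1) * ‖T x‖) := by
      rw [hK]
      simp only [← Finset.sum_mul]
  _ ≤ (K * (Real.sqrt d + 1) + 1) * ‖T x‖ := by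
      nlinarith [norm_nonneg (T x), Real.sqrt_nonneg d, hK0]

end
end

section
/- Let n ∈ ℕ, R > 0, α ∈ (0,1] and C₀ > 0. Let f : ℝⁿ → ℝ be differentiable and satisfy the one-sided C^{1,α} bound f(x + t q) ≤ f(x) + t ∇f(x)·q + C₀ t^{1+α} for all x with |x| ≤ R, all unit vectors q and all t ∈ [0,1]. Let (f_k) be a sequence of convex differentiable functions ℝⁿ → ℝ such that sup_{|x| ≤ R+1} |f_k(x) − f(x)| → 0 as k → ∞. Then sup_{|x| ≤ R} |∇f_k(x) − ∇f(x)| → 0 as k → ∞. (Core of the proof that the gradients of the inf-convolutions V_ε converge uniformly to D_{x₀}V on bounded sets.) -/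
open Set
open scoped RealInnerProductSpace

/-- Subgradient inequality along a direction for a convex differentiable function. -/
lemma subgrad_dir {n : ℕ} (g : EuclideanSpace ℝ (Fin n) → ℝ) (hg : Differentiable ℝ g)
    (hconv : ConvexOn ℝ univ g) (x q : EuclideanSpace ℝ (Fin n)) (t : ℝ) (ht : 0 < t) :
    t * ⟪gradient g x, q⟫ ≤ g (x + t • q) - g x := by
  set φ : ℝ → ℝ := fun s => g (x + s • q) with hφ
  have hc : HasDerivAt (fun s : ℝ => x + s • q) q 0 := by
    simpa using ((hasDerivAt_id (0 : ℝ)).smul_const q).const_add x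
  have hgrad : HasFDerivAt g ((InnerProductSpace.toDual ℝ _) (gradient g x)) x :=
    hasGradientAt_iff_hasFDerivAt.mp (hg x).hasGradientAt
  have hgrad' : HasFDerivAt g ((InnerProductSpace.toDual ℝ _) (gradient g x))
      (x + (0 : ℝ) • q) := by simpa using hgrad
  have hder : HasDerivAt φ ⟪gradient g x, q⟫ 0 := by
    have := hgrad'.comp_hasDerivAt (0 : ℝ) hc
    simpa [hφ, Function.comp_def] using this
  have hφconv : ConvexOn ℝ univ φ := by
    have := hconv.comp_affineMap (AffineMap.lineMap x (x + q))
    have heq : φ = g ∘ (AffineMap.lineMap x (x + q)) := by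
      funext s
      simp [hφ, AffineMap.lineMap_apply, add_comm]
    rw [heq]
    simpa using this
  have hslope := hφconv.le_slope_of_hasDerivAt (mem_univ 0) (mem_univ t) ht hder
  rw [slope_def_field] at hslope
  have : ⟪gradient g x, q⟫ ≤ (φ t - φ 0) / t := by
    simpa using hslope
  have h2 := (le_div_iff₀ ht).mp this
  have : φ 0 = g x := by simp [hφ]
  nlinarith [h2]

/-- **Uniform convergence of gradients of convex approximations**
(core of Lemma 4.1 (iii), convergence `D_{x₀}V_ε → D_{x₀}V`).
If `f : ℝⁿ → ℝ` is differentiable with a one-sided `C^{1,α}` bound on the ball of radius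
`R`, and `(f_k)` are convex differentiable functions converging uniformly to `f` on the
ball of radius `R+1`, then `∇f_k → ∇f` uniformly on the ball of radius `R`. -/
theorem gradient_convergence_of_convex_uniform
    (n : ℕ) (R : ℝ) (hR : 0 < R) (α : ℝ) (hα : α ∈ Ioc (0 : ℝ) 1) (C₀ : ℝ) (hC₀ : 0 < C₀)
    (f : EuclideanSpace ℝ (Fin n) → ℝ) (hf : Differentiable ℝ f)
    (hfC1α : ∀ x : EuclideanSpace ℝ (Fin n), ‖x‖ ≤ R →
      ∀ q : EuclideanSpace ℝ (Fin n), ‖q‖ = 1 → ∀ t ∈ Icc (0 : ℝ) 1,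
        f (x + t • q) ≤ f x + t * ⟪gradient f x, q⟫ + C₀ * t ^ (1 + α))
    (fk : ℕ → EuclideanSpace ℝ (Fin n) → ℝ)
    (hfkconv : ∀ k, ConvexOn ℝ univ (fk k))
    (hfkdiff : ∀ k, Differentiable ℝ (fk k))
    (hunif : ∀ ε > (0 : ℝ), ∃ N : ℕ, ∀ k ≥ N, ∀ x : EuclideanSpace ℝ (Fin n),
      ‖x‖ ≤ R + 1 → |fk k x - f x| ≤ ε) :
    ∀ ε > (0 : ℝ), ∃ N : ℕ, ∀ k ≥ N, ∀ x : EuclideanSpace ℝ (Fin n),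
      ‖x‖ ≤ R → ‖gradient (fk k) x - gradient f x‖ ≤ ε := by
  intro ε hε
  obtain ⟨hα0, hα1⟩ := hα
  -- choose t₀
  set t₀ : ℝ := min 1 ((ε / (2 * C₀)) ^ (1 / α)) with ht₀def
  have hb : (0 : ℝ) < ε / (2 * C₀) := by positivity
  have ht₀pos : 0 < t₀ := lt_min one_pos (Real.rpow_pos_of_pos hb _)
  have ht₀le1 : t₀ ≤ 1 := min_le_left _ _
  have hCt : C₀ * t₀ ^ α ≤ ε / 2 := by
    have h1 : t₀ ^ α ≤ ((ε / (2 * C₀)) ^ (1 / α)) ^ α :=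
      Real.rpow_le_rpow ht₀pos.le (min_le_right _ _) hα0.le
    have h2 : ((ε / (2 * C₀)) ^ (1 / α)) ^ α = ε / (2 * C₀) := by
      rw [← Real.rpow_mul hb.le, one_div, inv_mul_cancel₀ hα0.ne', Real.rpow_one]
    rw [h2] at h1
    calc C₀ * t₀ ^ α ≤ C₀ * (ε / (2 * C₀)) := by nlinarith
      _ = ε / 2 := by field_simp
  obtain ⟨N, hN⟩ := hunif (ε * t₀ / 4) (by positivity)
  refine ⟨N, fun k hk x hx => ?_⟩
  set v := gradient (fk k) x - gradient f x with hv
  -- key directional estimate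
  have key : ∀ q : EuclideanSpace ℝ (Fin n), ‖q‖ = 1 → ⟪v, q⟫ ≤ ε := by
    intro q hq
    have hxball : ‖x‖ ≤ R + 1 := by linarith
    have hx'ball : ‖x + t₀ • q‖ ≤ R + 1 := by
      calc ‖x + t₀ • q‖ ≤ ‖x‖ + ‖t₀ • q‖ := norm_add_le _ _
        _ = ‖x‖ + t₀ := by rw [norm_smul, hq, Real.norm_eq_abs, abs_of_pos ht₀pos, mul_one]
        _ ≤ R + 1 := by linarith
    have h1 : t₀ * ⟪gradient (fk k) x, q⟫ ≤ fk k (x + t₀ • q) - fk k x :=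
      subgrad_dir (fk k) (hfkdiff k) (hfkconv k) x q t₀ ht₀pos
    have h2 := hN k hk x hxball
    have h3 := hN k hk (x + t₀ • q) hx'ball
    have h4 := hfC1α x hx q hq t₀ ⟨ht₀pos.le, ht₀le1⟩
    have habs2 := abs_le.mp h2
    have habs3 := abs_le.mp h3
    have hpow : t₀ ^ (1 + α) = t₀ * t₀ ^ α := by
      rw [Real.rpow_add ht₀pos, Real.rpow_one]
    -- combine: t₀ * ⟪∇fk x, q⟫ ≤ t₀ * ⟪∇f x, q⟫ + C₀ t₀^{1+α} + 2 * (ε t₀ / 4)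
    have hcomb : t₀ * ⟪gradient (fk k) x, q⟫ ≤
        t₀ * ⟪gradient f x, q⟫ + C₀ * (t₀ * t₀ ^ α) + ε * t₀ / 2 := by
      rw [← hpow]; linarith
    have hinner : ⟪v, q⟫ = ⟪gradient (fk k) x, q⟫ - ⟪gradient f x, q⟫ := by
      rw [hv, inner_sub_left]
    have hdiv : t₀ * ⟪v, q⟫ ≤ t₀ * ε := by
      rw [hinner]
      nlinarith [ht₀pos, hCt]
    exact le_of_mul_le_mul_left (by linarith [hdiv]) ht₀pos
  -- from directional estimate to norm estimate
  by_cases hv0 : v = 0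
  · rw [hv0]; simpa using hε.le
  · have hnv : 0 < ‖v‖ := norm_pos_iff.mpr hv0
    have := key (‖v‖⁻¹ • v) (by rw [norm_smul, norm_inv, norm_norm, inv_mul_cancel₀ hnv.ne'])
    rwa [real_inner_smul_right, real_inner_self_eq_norm_sq,
      inv_mul_eq_div, pow_two, mul_div_assoc, div_self hnv.ne', mul_one] at this
end
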